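/- arXiv:1011.2593 — 4 statements merged into one kernel-verified Lean document; each statement's English description precedes it below -/
import Mathlib

section
/- Let F be a group, R a normal subgroup of F, and c ≥ 1. If u ∈ F is an outer-commutator value of weight w on entries x_1, …, x_w ∈ F, with w > c, and at least one entry x_j lies in R, then u ∈ [R, cF]. -/
/-- `[R, cF]`: the iterated commutator subgroup, `[R, 0F] = R`,
`[R, (i+1)F] = ⁅[R, iF], F⁆`. -/
def iteratedCommutator {F : Type*} [Group F] (R : Subgroup F) : ℕ → Subgroup F
  | 0 => R
  | c + 1 => ⁅iteratedCommutator R c, (⊤ : Subgroup F)⁆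

open scoped commutatorElement

/-- `IsOuterCommutatorOn l u` means that `u` is an outer-commutator value on
the list of entries `l` (of weight `l.length`). -/
inductive IsOuterCommutatorOn {F : Type*} [Group F] : List F → F → Prop
  | base (x : F) : IsOuterCommutatorOn [x] x
  | comm {l₁ l₂ : List F} {u v : F} :
      IsOuterCommutatorOn l₁ u → IsOuterCommutatorOn l₂ v →
      IsOuterCommutatorOn (l₁ ++ l₂) ⁅u, v⁆

section Aux
variable {F : Type*} [Group F]

instance iteratedCommutator_normal (R : Subgroup F) [R.Normal] (n : ℕ) :
    (iteratedCommutator R n).Normal := by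
  induction n with
  | zero => assumption
  | succ n ih => exact @Subgroup.commutator_normal _ _ _ ⊤ ih _

theorem iteratedCommutator_add (R : Subgroup F) (a b : ℕ) :
    iteratedCommutator R (a + b) = iteratedCommutator (iteratedCommutator R a) b := by
  induction b with
  | zero => rfl
  | succ b ih => show ⁅iteratedCommutator R (a+b), ⊤⁆ = _; rw [ih]; rfl

theorem iteratedCommutator_antitone (R : Subgroup F) [R.Normal] {m n : ℕ} (h : m ≤ n) :
    iteratedCommutator R n ≤ iteratedCommutator R m := by
  induction n with
  | zero => simpa [Nat.le_zero.mp h] using le_refl R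
  | succ n ih =>
    rcases Nat.lt_or_ge m (n+1) with h' | h'
    · refine le_trans ?_ (ih (Nat.lt_succ_iff.mp h'))
      intro x hx
      refine Subgroup.commutator_le.mpr (fun g₁ h₁ g₂ _ => ?_) hx
      have : g₂ * g₁ * g₂⁻¹ ∈ iteratedCommutator R n :=
        (iteratedCommutator_normal R n).conj_mem g₁ h₁ g₂
      simpa [commutatorElement_def, mul_assoc] using
        mul_mem h₁ (by simpa [mul_assoc] using (iteratedCommutator R n).inv_mem this)
    · have : m = n + 1 := le_antisymm h h'
      subst this; exact le_refl _

theorem three_subgroups {A B C N : Subgroup F} [N.Normal]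
    (h1 : ⁅⁅B, C⁆, A⁆ ≤ N) (h2 : ⁅⁅C, A⁆, B⁆ ≤ N) : ⁅⁅A, B⁆, C⁆ ≤ N := by
  let π := QuotientGroup.mk' N
  have key : ∀ {H : Subgroup F}, H ≤ N ↔ Subgroup.map π H = ⊥ := by
    intro H
    rw [Subgroup.map_eq_bot_iff, QuotientGroup.ker_mk']
  rw [key] at h1 h2 ⊢
  simp only [Subgroup.map_commutator] at h1 h2 ⊢
  exact Subgroup.commutator_commutator_eq_bot_of_rotate h1 h2

theorem comm_lcs (n : ℕ) : ∀ (R : Subgroup F) [R.Normal],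
    ⁅R, Subgroup.lowerCentralSeries (⊤ : Subgroup F) n⁆ ≤ iteratedCommutator R (n + 1) := by
  induction n with
  | zero => intro R _; exact le_refl _
  | succ n ih =>
    intro R _
    show ⁅R, ⁅Subgroup.lowerCentralSeries (⊤ : Subgroup F) n, ⊤⁆⁆ ≤ _
    rw [Subgroup.commutator_comm]
    apply three_subgroups
    · rw [Subgroup.commutator_comm (⊤ : Subgroup F) R]
      calc ⁅⁅R, ⊤⁆, Subgroup.lowerCentralSeries (⊤ : Subgroup F) n⁆
          = ⁅iteratedCommutator R 1, Subgroup.lowerCentralSeries (⊤ : Subgroup F) n⁆ := rfl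
        _ = ⁅Subgroup.lowerCentralSeries (⊤ : Subgroup F) n, iteratedCommutator R 1⁆ := Subgroup.commutator_comm _ _
        _ ≤ iteratedCommutator (iteratedCommutator R 1) (n + 1) := by
            rw [Subgroup.commutator_comm]; exact ih _
        _ = iteratedCommutator R (n + 2) := by rw [← iteratedCommutator_add, Nat.add_comm]
    · calc ⁅⁅R, Subgroup.lowerCentralSeries (⊤ : Subgroup F) n⁆, ⊤⁆
          ≤ ⁅iteratedCommutator R (n + 1), ⊤⁆ := Subgroup.commutator_mono (ih R) (le_refl _)
        _ = iteratedCommutator R (n + 2) := rfl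

theorem iteratedCommutator_lcs (n b : ℕ) :
    iteratedCommutator (Subgroup.lowerCentralSeries (⊤ : Subgroup F) n) b = Subgroup.lowerCentralSeries (⊤ : Subgroup F) (n + b) := by
  induction b with
  | zero => rfl
  | succ b ih => show ⁅iteratedCommutator _ b, ⊤⁆ = _; rw [ih]; rfl

theorem outer_ne_nil {l : List F} {u : F} (hu : IsOuterCommutatorOn l u) : 1 ≤ l.length := by
  induction hu with
  | base => simp
  | comm _ _ ih1 ih2 => simp; omega

theorem outer_mem_lcs {l : List F} {u : F} (hu : IsOuterCommutatorOn l u) :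
    u ∈ Subgroup.lowerCentralSeries (⊤ : Subgroup F) (l.length - 1) := by
  induction hu with
  | base x => exact Subgroup.mem_top x
  | @comm l₁ l₂ u v h1 h2 ih1 ih2 =>
    have n1 := outer_ne_nil h1
    have n2 := outer_ne_nil h2
    have key : ⁅Subgroup.lowerCentralSeries (⊤ : Subgroup F) (l₁.length - 1), Subgroup.lowerCentralSeries (⊤ : Subgroup F) (l₂.length - 1)⁆
        ≤ Subgroup.lowerCentralSeries (⊤ : Subgroup F) ((l₁ ++ l₂).length - 1) := by
      have := comm_lcs (F := F) (l₂.length - 1) (Subgroup.lowerCentralSeries (⊤ : Subgroup F) (l₁.length - 1))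
      rw [iteratedCommutator_lcs] at this
      refine this.trans (Subgroup.lowerCentralSeries_antitone ⊤ ?_)
      simp; omega
    exact key (Subgroup.commutator_mem_commutator ih1 ih2)

theorem outer_mem_iterated {l : List F} {u : F} (hu : IsOuterCommutatorOn l u)
    (R : Subgroup F) [R.Normal] (hx : ∃ x ∈ l, x ∈ R) :
    u ∈ iteratedCommutator R (l.length - 1) := by
  induction hu with
  | base x => rcases hx with ⟨y, hy, hyR⟩; simp at hy; subst hy; exact hyR
  | @comm l₁ l₂ u v h1 h2 ih1 ih2 =>
    have n1 := outer_ne_nil h1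
    have n2 := outer_ne_nil h2
    rcases hx with ⟨x, hx, hxR⟩
    rcases List.mem_append.mp hx with hmem | hmem
    · have hu' := ih1 ⟨x, hmem, hxR⟩
      have hv' := outer_mem_lcs h2
      have key : ⁅iteratedCommutator R (l₁.length - 1), Subgroup.lowerCentralSeries (⊤ : Subgroup F) (l₂.length - 1)⁆
          ≤ iteratedCommutator R ((l₁ ++ l₂).length - 1) := by
        refine (comm_lcs _ _).trans ?_
        rw [← iteratedCommutator_add]
        apply iteratedCommutator_antitone
        simp; omega
      exact key (Subgroup.commutator_mem_commutator hu' hv')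
    · have hv' := ih2 ⟨x, hmem, hxR⟩
      have hu' := outer_mem_lcs h1
      have key : ⁅iteratedCommutator R (l₂.length - 1), Subgroup.lowerCentralSeries (⊤ : Subgroup F) (l₁.length - 1)⁆
          ≤ iteratedCommutator R ((l₁ ++ l₂).length - 1) := by
        refine (comm_lcs _ _).trans ?_
        rw [← iteratedCommutator_add]
        apply iteratedCommutator_antitone
        simp; omega
      have : ⁅u, v⁆ ∈ ⁅Subgroup.lowerCentralSeries (⊤ : Subgroup F) (l₁.length - 1),
          iteratedCommutator R (l₂.length - 1)⁆ :=
        Subgroup.commutator_mem_commutator hu' hv'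
      rw [Subgroup.commutator_comm] at this
      exact key this

end Aux

/-- Claim in the proof of Lemma 3.1: an outer-commutator value of weight `w > c`
with at least one entry lying in the normal subgroup `R` belongs to `[R, cF]`. -/
theorem outerCommutator_mem_iteratedCommutator {F : Type*} [Group F]
    (R : Subgroup F) [R.Normal] (c : ℕ) (hc : 1 ≤ c)
    (l : List F) (u : F) (hu : IsOuterCommutatorOn l u)
    (hw : c < l.length) (hx : ∃ x ∈ l, x ∈ R) :
    u ∈ iteratedCommutator R c := by
  have := outer_mem_iterated hu R hx
  exact iteratedCommutator_antitone R (by omega) this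
end

section
/- Let p be a prime, e ≥ 1, k ≥ 1, c ≥ 1 integers, and set m = ⌊log_p k⌋. Let F be a free group and R a normal subgroup of F such that γ_{k+1}(F) ≤ R and x^(p^e) ∈ R for every x ∈ F (so that G = F/R is a p-group of nilpotency class at most k and exponent dividing p^e). Then for every g ∈ γ_{c+1}(F), one has g^(p^(e+m(k−1))) ∈ [R, cF]; that is, the exponent of the group γ_{c+1}(F)/[R, cF] divides p^(e+m(k−1)). -/
namespace NilMult

open Subgroup hiding lowerCentralSeries lowerCentralSeries_antitone
open scoped commutatorElement

variable {G : Type*} [Group G]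

abbrev lowerCentralSeries (G : Type*) [Group G] : ℕ → Subgroup G :=
  (⊤ : Subgroup G).lowerCentralSeries

theorem lowerCentralSeries_antitone {G : Type*} [Group G] : Antitone (lowerCentralSeries G) :=
  Subgroup.lowerCentralSeries_antitone ⊤

theorem three_subgroups {H₁ H₂ H₃ N : Subgroup G} [N.Normal]
    (h1 : ⁅⁅H₂, H₃⁆, H₁⁆ ≤ N) (h2 : ⁅⁅H₃, H₁⁆, H₂⁆ ≤ N) : ⁅⁅H₁, H₂⁆, H₃⁆ ≤ N := by
  have key : ∀ A B : Subgroup G, ⁅A, B⁆ ≤ N ↔ ⁅map (QuotientGroup.mk' N) A, map (QuotientGroup.mk' N) B⁆ = ⊥ := by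
    intro A B
    rw [← Subgroup.map_commutator, Subgroup.map_eq_bot_iff, QuotientGroup.ker_mk']
  rw [key] at h1 h2 ⊢
  rw [Subgroup.map_commutator] at h1 h2 ⊢
  exact commutator_commutator_eq_bot_of_rotate h1 h2

theorem lcs_succ_comm (n : ℕ) :
    lowerCentralSeries G (n + 1) = ⁅lowerCentralSeries G n, (⊤ : Subgroup G)⁆ := rfl

theorem comm_lcs_lcs (a b : ℕ) :
    ⁅lowerCentralSeries G a, lowerCentralSeries G b⁆ ≤ lowerCentralSeries G (a + b + 1) := by
  induction a generalizing b with
  | zero =>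
    have : lowerCentralSeries G 0 = (⊤ : Subgroup G) := rfl
    rw [this, Subgroup.commutator_comm, ← lcs_succ_comm]
    simpa using le_refl _
  | succ a ih =>
    rw [lcs_succ_comm]
    refine three_subgroups ?_ ?_
    · rw [Subgroup.commutator_comm (⊤ : Subgroup G), ← lcs_succ_comm, Subgroup.commutator_comm]
      have := ih (b + 1)
      convert this using 2
      omega
    · rw [Subgroup.commutator_comm (lowerCentralSeries G b)]
      refine le_trans (Subgroup.commutator_mono (ih b) le_rfl) ?_
      rw [← lcs_succ_comm]
      have : a + b + 1 + 1 = a + 1 + b + 1 := by omega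
      rw [this]

variable (R : Subgroup G) [R.Normal]

instance itC_normal : ∀ c, (iteratedCommutator R c).Normal
  | 0 => ‹R.Normal›
  | c + 1 => by
    have := itC_normal c
    show (⁅iteratedCommutator R c, (⊤ : Subgroup G)⁆).Normal
    infer_instance

theorem itC_succ_le (c : ℕ) : iteratedCommutator R (c + 1) ≤ iteratedCommutator R c := by
  have := itC_normal R c
  exact Subgroup.commutator_le_left _ _

theorem lcs_le_itC (k : ℕ) (hR : lowerCentralSeries G k ≤ R) :
    ∀ j, lowerCentralSeries G (k + j) ≤ iteratedCommutator R j
  | 0 => hR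
  | j + 1 => by
    have : k + (j + 1) = (k + j) + 1 := rfl
    rw [this, lcs_succ_comm]
    exact Subgroup.commutator_mono (lcs_le_itC k hR j) le_rfl

/-- `⁅γ_i, [R, jG]⁆ ≤ [R, (i+j+1)G]`. -/
theorem comm_lcs_itC (i : ℕ) :
    ∀ j, ⁅lowerCentralSeries G i, iteratedCommutator R j⁆ ≤ iteratedCommutator R (i + j + 1) := by
  induction i with
  | zero =>
    intro j
    have h0 : lowerCentralSeries G 0 = (⊤ : Subgroup G) := rfl
    rw [h0, Subgroup.commutator_comm]
    have : (0:ℕ) + j + 1 = j + 1 := by omega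
    rw [this]
    exact le_rfl
  | succ i ih =>
    intro j
    have := itC_normal R (i + j + 2)
    have harith : i + 1 + j + 1 = i + j + 2 := by omega
    rw [lcs_succ_comm, harith]
    refine three_subgroups ?_ ?_
    · rw [Subgroup.commutator_comm (⊤ : Subgroup G) (iteratedCommutator R j)]
      have h1 : ⁅⁅iteratedCommutator R j, (⊤ : Subgroup G)⁆, lowerCentralSeries G i⁆
          = ⁅lowerCentralSeries G i, iteratedCommutator R (j+1)⁆ := by
        rw [Subgroup.commutator_comm]
        rfl
      rw [h1]
      have h2 := ih (j + 1)
      have : i + (j + 1) + 1 = i + j + 2 := by omega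
      rwa [this] at h2
    · rw [Subgroup.commutator_comm (iteratedCommutator R j)]
      have h3 : ⁅lowerCentralSeries G i, iteratedCommutator R j⁆ ≤ iteratedCommutator R (i + j + 1) := ih j
      refine le_trans (Subgroup.commutator_mono h3 le_rfl) ?_
      exact le_of_eq rfl

theorem lcs_map_surjective {H : Type*} [Group H] (f : G →* H) (hf : Function.Surjective f) :
    ∀ n, Subgroup.map f (lowerCentralSeries G n) = lowerCentralSeries H n
  | 0 => by
    simp [show lowerCentralSeries G 0 = ⊤ from rfl, show lowerCentralSeries H 0 = ⊤ from rfl,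
      Subgroup.map_top_of_surjective f hf]
  | n + 1 => by
    rw [lcs_succ_comm, lcs_succ_comm, Subgroup.map_commutator,
      lcs_map_surjective f hf n, Subgroup.map_top_of_surjective f hf]


section Engine
variable {L : Type*} [Group L]

/-- conjugation -/
def cnj (g x : L) : L := g * x * g⁻¹

@[simp] theorem cnj_one_left (x : L) : cnj (1 : L) x = x := by simp [cnj]
@[simp] theorem cnj_one_right (g : L) : cnj g (1 : L) = 1 := by simp [cnj]
theorem cnj_mul (g x y : L) : cnj g (x * y) = cnj g x * cnj g y := by simp only [cnj]; group
theorem cnj_inv (g x : L) : cnj g x⁻¹ = (cnj g x)⁻¹ := by simp only [cnj]; group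
theorem cnj_cnj (g h x : L) : cnj g (cnj h x) = cnj (g * h) x := by simp only [cnj]; group
theorem cnj_pow (g x : L) (n : ℕ) : cnj g (x ^ n) = (cnj g x) ^ n := by
  induction n with
  | zero => simp
  | succ n ih => rw [pow_succ, cnj_mul, ih, pow_succ]
theorem cnj_mem {g x : L} {H : Subgroup L} [H.Normal] (hx : x ∈ H) (g : L) : cnj g x ∈ H := by
  simpa [cnj] using Subgroup.Normal.conj_mem ‹H.Normal› x hx g

theorem comm_def (a b : L) : ⁅a, b⁆ = a * b * a⁻¹ * b⁻¹ := rfl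
theorem comm_mul_left (a b c : L) : ⁅a * b, c⁆ = cnj a ⁅b, c⁆ * ⁅a, c⁆ := by
  simp only [commutatorElement_def, cnj]; group
theorem comm_mul_right (a b c : L) : ⁅a, b * c⁆ = ⁅a, b⁆ * cnj b ⁅a, c⁆ := by
  simp only [commutatorElement_def, cnj]; group
theorem cnj_eq_mul_comm (χ x : L) : cnj χ x = x * ⁅x⁻¹, χ⁆ := by
  simp only [commutatorElement_def, cnj]; group
theorem comm_mem_lcs {x y : L} {u v : ℕ} (hx : x ∈ lowerCentralSeries L u)
    (hy : y ∈ lowerCentralSeries L v) : ⁅x, y⁆ ∈ lowerCentralSeries L (u + v + 1) :=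
  comm_lcs_lcs u v (Subgroup.commutator_mem_commutator hx hy)
theorem comm_mem_lcs' {x y : L} {u v w : ℕ} (hx : x ∈ lowerCentralSeries L u)
    (hy : y ∈ lowerCentralSeries L v) (hw : w ≤ u + v + 1) :
    ⁅x, y⁆ ∈ lowerCentralSeries L w :=
  lowerCentralSeries_antitone hw (comm_mem_lcs hx hy)
theorem mem_lcs_zero (x : L) : x ∈ lowerCentralSeries L 0 := trivial

/-- structured conjugator functions: the group generated by constants and plain
binomial powers `n ↦ v ^ (n.choose j)` of elements with a level certificate. -/
inductive IsX : (ℕ → L) → Prop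
  | const (g : L) : IsX (fun _ => g)
  | pow (v : L) (j lv : ℕ) (hv : v ∈ lowerCentralSeries L lv) (hj : j ≤ lv) :
      IsX (fun n => v ^ (n.choose j))
  | mul {f g : ℕ → L} : IsX f → IsX g → IsX (fun n => f n * g n)
  | inv {f : ℕ → L} : IsX f → IsX (fun n => (f n)⁻¹)

theorem IsX.congr {f g : ℕ → L} (h : IsX f) (hfg : ∀ n, f n = g n) : IsX g := by
  have : f = g := funext hfg
  rwa [this] at h

theorem IsX.one : IsX (fun _ => (1 : L)) := IsX.const 1

theorem IsX.cnjfun {χ f : ℕ → L} (hχ : IsX χ) (hf : IsX f) :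
    IsX (fun n => cnj (χ n) (f n)) := ((hχ.mul hf).mul hχ.inv).congr (fun n => by simp [cnj, mul_assoc])

/-- an atom: a conjugated binomial power of a fixed element. -/
structure Atom (L : Type*) [Group L] where
  w : L
  d : ℕ
  lv : ℕ
  χ : ℕ → L

def Atom.eval (a : Atom L) (n : ℕ) : L := cnj (a.χ n) (a.w ^ (n.choose a.d))

def evalL (l : List (Atom L)) (n : ℕ) : L := (l.map (fun a => a.eval n)).prod

@[simp] theorem evalL_nil (n : ℕ) : evalL ([] : List (Atom L)) n = 1 := rfl
theorem evalL_cons (a : Atom L) (l : List (Atom L)) (n : ℕ) :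
    evalL (a :: l) n = a.eval n * evalL l n := by simp [evalL]
theorem evalL_append (l₁ l₂ : List (Atom L)) (n : ℕ) :
    evalL (l₁ ++ l₂) n = evalL l₁ n * evalL l₂ n := by simp [evalL]

/-- atom validity: membership certificate, structured conjugator, constraint `P d lv`. -/
def AtOK (P : ℕ → ℕ → Prop) (a : Atom L) : Prop :=
  a.w ∈ lowerCentralSeries L a.lv ∧ IsX a.χ ∧ P a.d a.lv

/-- the class of certified correction functions with atom constraint `P`. -/
def Cor (P : ℕ → ℕ → Prop) (f : ℕ → L) : Prop :=
  ∃ l : List (Atom L), (∀ a ∈ l, AtOK P a) ∧ ∀ n, f n = evalL l n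

theorem Cor.congr {P} {f g : ℕ → L} (h : Cor P f) (hfg : ∀ n, f n = g n) : Cor P g := by
  obtain ⟨l, h1, h2⟩ := h
  exact ⟨l, h1, fun n => (hfg n).symm.trans (h2 n)⟩

theorem Cor.one (P : ℕ → ℕ → Prop) : Cor P (fun _ => (1 : L)) := ⟨[], by simp, by simp⟩

theorem Cor.mul {P} {f g : ℕ → L} (hf : Cor P f) (hg : Cor P g) :
    Cor P (fun n => f n * g n) := by
  obtain ⟨l₁, h1, h2⟩ := hf
  obtain ⟨l₂, h3, h4⟩ := hg
  refine ⟨l₁ ++ l₂, ?_, fun n => by show f n * g n = _; rw [evalL_append, h2, h4]⟩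
  intro a ha
  rcases List.mem_append.mp ha with h | h
  · exact h1 a h
  · exact h3 a h

theorem Cor.mono {P Q} (hPQ : ∀ d lv, P d lv → Q d lv) {f : ℕ → L} (hf : Cor P f) : Cor Q f := by
  obtain ⟨l, h1, h2⟩ := hf
  exact ⟨l, fun a ha => ⟨(h1 a ha).1, (h1 a ha).2.1, hPQ _ _ (h1 a ha).2.2⟩, h2⟩

theorem Cor.inv {P} {f : ℕ → L} (hf : Cor P f) : Cor P (fun n => (f n)⁻¹) := by
  obtain ⟨l, h1, h2⟩ := hf
  refine ⟨(l.map (fun a => ⟨a.w⁻¹, a.d, a.lv, a.χ⟩)).reverse, ?_, ?_⟩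
  · intro a ha
    rw [List.mem_reverse] at ha
    obtain ⟨b, hb, rfl⟩ := List.mem_map.mp ha
    obtain ⟨m1, m2, m3⟩ := h1 b hb
    exact ⟨inv_mem m1, m2, m3⟩
  · intro n
    show (f n)⁻¹ = _
    rw [h2]
    clear h2 h1
    induction l with
    | nil => simp
    | cons a l ih =>
      rw [evalL_cons, mul_inv_rev, ih]
      simp only [List.map_cons, List.reverse_cons, evalL_append, evalL_cons]
      congr 1
      simp [Atom.eval, cnj_inv, inv_pow, evalL]

theorem Cor.cnjfun {P} {f : ℕ → L} (hf : Cor P f) {ψ : ℕ → L} (hψ : IsX ψ) :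
    Cor P (fun n => cnj (ψ n) (f n)) := by
  obtain ⟨l, h1, h2⟩ := hf
  refine ⟨l.map (fun a => ⟨a.w, a.d, a.lv, fun n => ψ n * a.χ n⟩), ?_, ?_⟩
  · intro a ha
    obtain ⟨b, hb, rfl⟩ := List.mem_map.mp ha
    obtain ⟨m1, m2, m3⟩ := h1 b hb
    exact ⟨m1, hψ.mul m2, m3⟩
  · intro n
    show cnj (ψ n) (f n) = _
    rw [h2]
    clear h2 h1
    induction l with
    | nil => simp
    | cons a l ih =>
      simp only [evalL_cons, List.map_cons, cnj_mul, ih]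
      congr 1
      simp [Atom.eval, cnj_cnj]

theorem Cor.single {P : ℕ → ℕ → Prop} (w : L) (d lv : ℕ) (χ : ℕ → L)
    (hw : w ∈ lowerCentralSeries L lv) (hχ : IsX χ) (hP : P d lv) :
    Cor P (fun n => cnj (χ n) (w ^ (n.choose d))) := by
  refine ⟨[⟨w, d, lv, χ⟩], ?_, ?_⟩
  · intro a ha
    simp only [List.mem_singleton] at ha
    subst ha
    exact ⟨hw, hχ, hP⟩
  · intro n
    simp [evalL, Atom.eval]

/-- certified functions are in the conjugator group 𝒳, provided atoms satisfy `d ≤ lv + 1`. -/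
theorem Cor.isX {P} (hP : ∀ d lv, P d lv → d ≤ lv) {f : ℕ → L} (hf : Cor P f) : IsX f := by
  obtain ⟨l, h1, h2⟩ := hf
  have : IsX (fun n => evalL l n) := by
    clear h2
    induction l with
    | nil => exact IsX.one.congr (by simp)
    | cons a l ih =>
      have ha := h1 a (by simp)
      have hl : ∀ b ∈ l, AtOK P b := fun b hb => h1 b (List.mem_cons_of_mem a hb)
      have h3 : IsX (fun n => a.eval n) :=
        (ha.2.1.cnjfun (IsX.pow a.w a.d a.lv ha.1 (hP _ _ ha.2.2)))
      exact (h3.mul (ih hl)).congr (fun n => (evalL_cons a l n).symm)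
  exact this.congr (fun n => (h2 n).symm)

/-- the twisted recursion operator: `D 0 = 1`, `D (n+1) = cnj (ξ n) (D n) * g n`. -/
def Drec (ξ g : ℕ → L) : ℕ → L
  | 0 => 1
  | n + 1 => cnj (ξ n) (Drec ξ g n) * g n

/-- splitting of a twisted recursion along a pointwise product. -/
theorem Drec_mul_eq (ξ g₁ g₂ : ℕ → L) :
    ∀ n, Drec ξ (fun n => g₁ n * g₂ n) n = Drec ξ g₁ n * Drec (fun n => (g₁ n)⁻¹ * ξ n) g₂ n := by
  intro n
  induction n with
  | zero => simp [Drec]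
  | succ n ih =>
    show cnj (ξ n) (Drec ξ (fun n => g₁ n * g₂ n) n) * (g₁ n * g₂ n) = _
    rw [ih, cnj_mul]
    show _ = cnj (ξ n) (Drec ξ g₁ n) * g₁ n * (cnj ((g₁ n)⁻¹ * ξ n) (Drec (fun n => (g₁ n)⁻¹ * ξ n) g₂ n) * g₂ n)
    simp only [cnj]
    group

theorem Drec_congr {ξ g g' : ℕ → L} (h : ∀ n, g n = g' n) (n : ℕ) : Drec ξ g n = Drec ξ g' n := by
  have : g = g' := funext h
  rw [this]

/-- uniqueness of solutions of the twisted recursion. -/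
theorem eq_Drec {ξ g f : ℕ → L} (h0 : f 0 = 1)
    (hrec : ∀ n, f (n + 1) = cnj (ξ n) (f n) * g n) : ∀ n, f n = Drec ξ g n := by
  intro n
  induction n with
  | zero => simpa [Drec] using h0
  | succ n ih => rw [hrec, ih]; rfl

/-- input-grade atom constraints. -/
def P0 (lam σ ls : ℕ) : ℕ → ℕ → Prop := fun d lv => lam + d + σ ≤ lv ∧ ls ≤ lv
/-- output-grade atom constraints. -/
def PO (lam σ ls : ℕ) : ℕ → ℕ → Prop := fun d lv => 1 ≤ d ∧ lam + d + σ ≤ lv + 1 ∧ ls ≤ lv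

theorem P0_mono {lam σ ls lam' σ' ls' : ℕ} (h1 : lam' ≤ lam) (h2 : σ' ≤ σ) (h3 : ls' ≤ ls) :
    ∀ d lv, P0 lam σ ls d lv → P0 lam' σ' ls' d lv := by
  intro d lv ⟨a, b⟩; exact ⟨by omega, by omega⟩
theorem PO_mono {lam σ ls lam' σ' ls' : ℕ} (h1 : lam' ≤ lam) (h2 : σ' ≤ σ) (h3 : ls' ≤ ls) :
    ∀ d lv, PO lam σ ls d lv → PO lam' σ' ls' d lv := by
  intro d lv ⟨a, b, c⟩; exact ⟨a, by omega, by omega⟩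
theorem PO_coerce {lam σ ls : ℕ} :
    ∀ d lv, PO (lam + 1) σ ls d lv → P0 lam σ ls d lv := by
  intro d lv ⟨a, b, c⟩; exact ⟨by omega, c⟩
theorem P0_isX {lam σ ls : ℕ} (h : 1 ≤ lam) : ∀ d lv, P0 lam σ ls d lv → d ≤ lv := by
  intro d lv ⟨a, _⟩; omega
theorem PO_isX {lam σ ls : ℕ} (h : 1 ≤ lam) : ∀ d lv, PO lam σ ls d lv → d ≤ lv := by
  intro d lv ⟨_, a, _⟩; omega

theorem pow_choose_pascal (w : L) (n d : ℕ) :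
    w ^ ((n + 1).choose (d + 1)) = w ^ (n.choose d) * w ^ (n.choose (d + 1)) := by
  rw [Nat.choose_succ_succ, pow_add]

end Engine
section Engine2
variable {L : Type*} [Group L]

theorem Drec_one (ξ : ℕ → L) : ∀ n, Drec ξ (fun _ => 1) n = 1 := by
  intro n
  induction n with
  | zero => rfl
  | succ n ih => show cnj (ξ n) _ * 1 = 1; rw [ih]; simp

theorem trivial_of_deep {J lv : ℕ} (hJ : lowerCentralSeries L J = ⊥) (h : J ≤ lv)
    {w : L} (hw : w ∈ lowerCentralSeries L lv) : w = 1 := by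
  have := lowerCentralSeries_antitone h hw
  rw [hJ] at this
  exact Subgroup.mem_bot.mp this

/-- The collection engine: brackets of binomial powers against structured conjugators
(`ES2`), against binomial powers (`ES4`), and the twisted-recursion solver (`ESOLVE`). -/
theorem ENGINE {J : ℕ} (hJ : lowerCentralSeries L J = ⊥) : ∀ fl : ℕ,
    ((∀ lam σ μ D lv : ℕ, ∀ w : L, ∀ ζ : ℕ → L, J ≤ lv + fl → 1 ≤ lam → μ ≤ 1 →
      w ∈ lowerCentralSeries L lv → lam + 1 ≤ lv → lam + D + σ ≤ lv + μ → IsX ζ →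
      Cor (P0 lam σ (lv+1)) (fun n => ⁅w ^ n.choose D, ζ n⁆)) ∧
    (∀ lam σ μ τ D lv j lvv : ℕ, ∀ w v : L, J ≤ lv + fl → 1 ≤ lam → μ ≤ 1 →
      w ∈ lowerCentralSeries L lv → v ∈ lowerCentralSeries L lvv →
      lam + 1 ≤ lv → lam + D + σ ≤ lv + μ → j + τ ≤ lvv →
      Cor (P0 lam (σ+τ) (lv+1)) (fun n => ⁅w ^ n.choose D, v ^ n.choose j⁆))) ∧
    (∀ lam σ ls : ℕ, ∀ ξ g : ℕ → L, J ≤ ls + fl → 1 ≤ lam → lam + 1 ≤ ls → IsX ξ →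
      Cor (P0 lam σ ls) g → Cor (PO lam σ ls) (Drec ξ g)) := by
  intro fl
  induction fl using Nat.strong_induction_on with
  | _ fl IH =>
  -- Step 0: the constant-second-argument case of ES2, with level accounting for y.
  have S2CONST : ∀ lam σ μ b D lv : ℕ, ∀ w y : L, J ≤ lv + fl → 1 ≤ lam → μ ≤ 1 →
      w ∈ lowerCentralSeries L lv → y ∈ lowerCentralSeries L b → lam + 1 ≤ lv →
      lam + D + σ ≤ lv + μ →
      Cor (P0 lam (σ + b) (lv+1)) (fun n => ⁅w ^ n.choose D, y⁆) := by
    intro lam σ μ b D lv w y hfl hlam hμ hw hy hlv hP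
    by_cases hdeep : J ≤ lv
    · have : w = 1 := trivial_of_deep hJ hdeep hw
      subst this
      exact (Cor.one _).congr (fun n => by simp)
    have hfl1 : 1 ≤ fl := by omega
    induction D generalizing σ with
    | zero =>
      refine (Cor.single ⁅w, y⁆ 0 (lv + b + 1) (fun _ => 1)
        (comm_mem_lcs hw hy) IsX.one ⟨by omega, by omega⟩).congr (fun n => ?_)
      simp [cnj]
    | succ D IHD =>
      have hg : Cor (P0 lam (σ + 1 + b) (lv+1)) (fun n => ⁅w ^ n.choose D, y⁆) :=
        IHD (σ + 1) (by omega)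
      have hξ : IsX (fun n => w ^ n.choose D) := IsX.pow w D lv hw (by omega)
      have hsolve := (IH (fl - 1) (by omega)).2 lam (σ + 1 + b) (lv + 1)
        (fun n => w ^ n.choose D) (fun n => ⁅w ^ n.choose D, y⁆)
        (by omega) hlam (by omega) hξ hg
      have heq : ∀ n, (fun n => ⁅w ^ n.choose (D+1), y⁆) n
          = Drec (fun n => w ^ n.choose D) (fun n => ⁅w ^ n.choose D, y⁆) n := by
        refine eq_Drec ?_ ?_
        · simp [Nat.choose_zero_succ]
        · intro n
          rw [pow_choose_pascal, comm_mul_left]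
      refine ((hsolve.mono ?_).congr (fun n => (heq n).symm))
      intro d lv' ⟨h1, h2, h3⟩
      exact ⟨by omega, h3⟩

  -- ES4: brackets of two binomial powers, by induction on D + j.
  have S4 : ∀ K lam σ μ τ D lv j lvv : ℕ, ∀ w v : L, D + j ≤ K → J ≤ lv + fl → 1 ≤ lam → μ ≤ 1 →
      w ∈ lowerCentralSeries L lv → v ∈ lowerCentralSeries L lvv →
      lam + 1 ≤ lv → lam + D + σ ≤ lv + μ → j + τ ≤ lvv →
      Cor (P0 lam (σ+τ) (lv+1)) (fun n => ⁅w ^ n.choose D, v ^ n.choose j⁆) := by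
    intro K
    induction K with
    | zero =>
      intro lam σ μ τ D lv j lvv w v hK hfl hlam hμ hw hv hlv hP hjτ
      have hD : D = 0 := by omega
      have hj : j = 0 := by omega
      subst hD; subst hj
      refine (Cor.single ⁅w, v⁆ 0 (lv + lvv + 1) (fun _ => 1)
        (comm_mem_lcs hw hv) IsX.one ⟨by omega, by omega⟩).congr (fun n => ?_)
      simp [cnj]
    | succ K IHK =>
      intro lam σ μ τ D lv j lvv w v hK hfl hlam hμ hw hv hlv hP hjτ
      by_cases hdeep : J ≤ lv
      · have : w = 1 := trivial_of_deep hJ hdeep hw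
        subst this
        exact (Cor.one _).congr (fun n => by simp)
      have hfl1 : 1 ≤ fl := by omega
      match j with
      | 0 =>
        have := S2CONST lam σ μ lvv D lv w v hfl hlam hμ hw hv hlv hP
        refine (this.mono ?_).congr (fun n => by simp)
        intro d lv' ⟨h1, h2⟩
        exact ⟨by omega, h2⟩
      | (j' + 1) =>
        match D with
        | 0 =>
          have hrec : Cor (P0 lam (σ+(τ+1)) (lv+1))
              (fun n => ⁅w ^ n.choose 0, v ^ n.choose j'⁆) :=
            IHK lam σ μ (τ+1) 0 lv j' lvv w v (by omega) hfl hlam hμ hw hv hlv hP (by omega)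
          have hχ : IsX (fun n => v ^ n.choose j') := IsX.pow v j' lvv hv (by omega)
          have hsolve := (IH (fl - 1) (by omega)).2 lam (σ+(τ+1)) (lv + 1)
            (fun n => v ^ n.choose j')
            (fun n => (⁅w ^ n.choose 0, v ^ n.choose j'⁆)⁻¹)
            (by omega) hlam (by omega) hχ hrec.inv
          have heq : ∀ n, (fun n => (⁅w ^ n.choose 0, v ^ n.choose (j'+1)⁆)⁻¹) n
              = Drec (fun n => v ^ n.choose j')
                  (fun n => (⁅w ^ n.choose 0, v ^ n.choose j'⁆)⁻¹) n := by
            refine eq_Drec ?_ ?_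
            · simp [Nat.choose_zero_succ]
            · intro n
              rw [pow_choose_pascal v n j', comm_mul_right]
              simp only [cnj, commutatorElement_def, Nat.choose_zero_right, pow_one]
              group
          refine (((hsolve.congr (fun n => (heq n).symm)).inv).mono ?_).congr (fun n => by simp)
          intro d lv' ⟨h1, h2, h3⟩
          exact ⟨by omega, h3⟩
        | (D' + 1) =>
          have hD'lv : D' ≤ lv := by omega
          have hDlv : D' + 1 ≤ lv := by omega
          have hj'lvv : j' ≤ lvv := by omega
          -- the three Pascal pieces
          have hXY' : Cor (P0 lam (σ+τ+1) (lv+1))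
              (fun n => ⁅w ^ n.choose D', v ^ n.choose (j'+1)⁆) := by
            have := IHK lam (σ+1) μ τ D' lv (j'+1) lvv w v (by omega) hfl hlam hμ hw hv hlv
              (by omega) (by omega)
            exact this.mono (fun d lv' ⟨h1, h2⟩ => ⟨by omega, h2⟩)
          have hX'Y : Cor (P0 lam (σ+τ+1) (lv+1))
              (fun n => ⁅w ^ n.choose (D'+1), v ^ n.choose j'⁆) := by
            have := IHK lam σ μ (τ+1) (D'+1) lv j' lvv w v (by omega) hfl hlam hμ hw hv hlv hP
              (by omega)
            exact this.mono (fun d lv' ⟨h1, h2⟩ => ⟨by omega, h2⟩)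
          have hXY : Cor (P0 lam (σ+τ+1) (lv+1))
              (fun n => ⁅w ^ n.choose D', v ^ n.choose j'⁆) := by
            have := IHK lam (σ+1) μ (τ+1) D' lv j' lvv w v (by omega) hfl hlam hμ hw hv hlv
              (by omega) (by omega)
            exact this.mono (fun d lv' ⟨h1, h2⟩ => ⟨by omega, h2⟩)
          have hXpow : IsX (fun n => w ^ n.choose D') := IsX.pow w D' lv hw hD'lv
          have hYpow : IsX (fun n => v ^ n.choose j') := IsX.pow v j' lvv hv hj'lvv
          set Pf : ℕ → L := fun n => cnj (w ^ n.choose D') ⁅w ^ n.choose (D'+1), v ^ n.choose j'⁆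
            * ⁅w ^ n.choose D', v ^ n.choose j'⁆ with hPf
          set Rf : ℕ → L := fun n => cnj (v ^ n.choose j') ⁅w ^ n.choose D', v ^ n.choose (j'+1)⁆
            with hRf
          have hPcor : Cor (P0 lam (σ+τ+1) (lv+1)) Pf := (hX'Y.cnjfun hXpow).mul hXY
          have hRcor : Cor (P0 lam (σ+τ+1) (lv+1)) Rf := hXY'.cnjfun hYpow
          have hg : Cor (P0 lam (σ+τ+1) (lv+1)) (fun n => Pf n * Rf n) := hPcor.mul hRcor
          have hξ : IsX (fun n => Pf n * (v ^ n.choose j' * w ^ n.choose D')) :=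
            (hPcor.isX (P0_isX hlam)).mul (hYpow.mul hXpow)
          have hsolve := (IH (fl - 1) (by omega)).2 lam (σ+τ+1) (lv + 1)
            (fun n => Pf n * (v ^ n.choose j' * w ^ n.choose D'))
            (fun n => Pf n * Rf n) (by omega) hlam (by omega) hξ hg
          have heq : ∀ n, (fun n => ⁅w ^ n.choose (D'+1), v ^ n.choose (j'+1)⁆) n
              = Drec (fun n => Pf n * (v ^ n.choose j' * w ^ n.choose D'))
                  (fun n => Pf n * Rf n) n := by
            refine eq_Drec ?_ ?_
            · simp [Nat.choose_zero_succ]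
            · intro n
              rw [pow_choose_pascal w n D', pow_choose_pascal v n j']
              simp only [hPf, hRf, cnj, commutatorElement_def]
              group
          refine ((hsolve.congr (fun n => (heq n).symm)).mono ?_)
          intro d lv' ⟨h1, h2, h3⟩
          exact ⟨by omega, h3⟩
  -- ES2: brackets of a binomial power against a structured conjugator.
  have S2 : ∀ lam σ μ D lv : ℕ, ∀ w : L, ∀ ζ : ℕ → L, J ≤ lv + fl → 1 ≤ lam → μ ≤ 1 →
      w ∈ lowerCentralSeries L lv → lam + 1 ≤ lv → lam + D + σ ≤ lv + μ → IsX ζ →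
      Cor (P0 lam σ (lv+1)) (fun n => ⁅w ^ n.choose D, ζ n⁆) := by
    intro lam σ μ D lv w ζ hfl hlam hμ hw hlv hP hζ
    induction hζ with
    | const y =>
      have := S2CONST lam σ μ 0 D lv w y hfl hlam hμ hw (mem_lcs_zero y) hlv hP
      exact this.mono (fun d lv' ⟨h1, h2⟩ => ⟨by omega, h2⟩)
    | pow v j lvv hv hj =>
      have := S4 (D + j) lam σ μ (lvv - j) D lv j lvv w v le_rfl hfl hlam hμ hw hv hlv hP
        (by omega)
      exact this.mono (fun d lv' ⟨h1, h2⟩ => ⟨by omega, h2⟩)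
    | @mul f₁ f₂ hf₁ hf₂ ih₁ ih₂ =>
      refine ((ih₁.mul (ih₂.cnjfun hf₁)).congr (fun n => ?_))
      rw [comm_mul_right]
    | @inv f hf ihf =>
      refine (((ihf.cnjfun hf.inv).inv).congr (fun n => ?_))
      simp only [cnj, commutatorElement_def]
      group
  refine ⟨⟨S2, fun lam σ μ τ D lv j lvv w v hfl hlam hμ hw hv hlv hP hjτ =>
    S4 (D + j) lam σ μ τ D lv j lvv w v le_rfl hfl hlam hμ hw hv hlv hP hjτ⟩, ?_⟩
  intro lam σ ls ξ g hls hlam hlamls hξ hg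
  obtain ⟨l, hl, hev⟩ := hg
  by_cases hdeep : J ≤ ls
  · -- everything is trivial this deep
    have hg1 : ∀ n, g n = 1 := by
      intro n
      rw [hev]
      clear hev
      induction l with
      | nil => simp
      | cons a l ihl =>
        have ha := hl a (by simp)
        have : a.w = 1 := trivial_of_deep hJ (le_trans hdeep ha.2.2.2) ha.1
        rw [evalL_cons, ihl (fun b hb => hl b (List.mem_cons_of_mem a hb))]
        simp [Atom.eval, this]
    refine (Cor.one _).congr (fun n => ?_)
    rw [Drec_congr hg1 n, Drec_one]
  · have hfl1 : 1 ≤ fl := by omega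
    suffices MAIN : ∀ l' : List (Atom L), (∀ a ∈ l', AtOK (P0 lam σ ls) a) → ∀ ξ : ℕ → L,
        IsX ξ → Cor (PO lam σ ls) (Drec ξ (evalL l')) by
      exact (MAIN l hl ξ hξ).congr (fun n => (Drec_congr hev n).symm)
    clear hev hξ hl g ξ
    intro l
    induction l with
    | nil =>
      intro _ ξ hξ
      refine (Cor.one _).congr (fun n => ?_)
      rw [show evalL ([] : List (Atom L)) = (fun _ => (1:L)) from rfl, Drec_one]
    | cons E l' ihl =>
      intro hl ξ hξ
      obtain ⟨hEw, hEχ, hEp1, hEp2⟩ : E.w ∈ lowerCentralSeries L E.lv ∧ IsX E.χ ∧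
          lam + E.d + σ ≤ E.lv ∧ ls ≤ E.lv := by
        have := hl E (by simp)
        exact ⟨this.1, this.2.1, this.2.2.1, this.2.2.2⟩
      have hdlv : E.d ≤ E.lv := by omega
      have hEpow : IsX (fun n => E.w ^ n.choose E.d) := IsX.pow E.w E.d E.lv hEw hdlv
      have hβdef : ∀ n, E.eval n = E.w ^ n.choose E.d * ⁅(E.w⁻¹) ^ n.choose E.d, E.χ n⁆ := by
        intro n
        rw [Atom.eval, cnj_eq_mul_comm, inv_pow]
      have hβ : Cor (P0 lam σ (E.lv + 1)) (fun n => ⁅(E.w⁻¹) ^ n.choose E.d, E.χ n⁆) :=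
        S2 lam σ 0 E.d E.lv E.w⁻¹ E.χ (by omega) hlam (by omega) (inv_mem hEw)
          (by omega) (by omega) hEχ
      have hβX : IsX (fun n => ⁅(E.w⁻¹) ^ n.choose E.d, E.χ n⁆) := hβ.isX (P0_isX hlam)
      have htail := ihl (fun b hb => hl b (List.mem_cons_of_mem E hb))
        (fun n => (E.w ^ n.choose E.d * ⁅(E.w⁻¹) ^ n.choose E.d, E.χ n⁆)⁻¹ * ξ n)
        (((hEpow.mul hβX).inv).mul hξ)
      have hβpart := (IH (fl - 1) (by omega)).2 lam σ (E.lv + 1)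
        (fun n => (E.w ^ n.choose E.d)⁻¹ * ξ n)
        (fun n => ⁅(E.w⁻¹) ^ n.choose E.d, E.χ n⁆)
        (by omega) hlam (by omega) (hEpow.inv.mul hξ) hβ
      have hβ₂ : Cor (P0 lam σ (E.lv + 1)) (fun n => ⁅(E.w⁻¹) ^ n.choose (E.d + 1), ξ n⁆) :=
        S2 lam σ 1 (E.d + 1) E.lv E.w⁻¹ ξ (by omega) hlam (by omega) (inv_mem hEw)
          (by omega) (by omega) hξ
      have hH : Cor (P0 lam σ (E.lv + 1))
          (fun n => (cnj ((E.w ^ n.choose E.d)⁻¹) ⁅(E.w⁻¹) ^ n.choose (E.d + 1), ξ n⁆)⁻¹) :=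
        (hβ₂.cnjfun hEpow.inv).inv
      have hW := (IH (fl - 1) (by omega)).2 lam σ (E.lv + 1)
        (fun n => (E.w ^ n.choose E.d)⁻¹ * ξ n)
        (fun n => (cnj ((E.w ^ n.choose E.d)⁻¹) ⁅(E.w⁻¹) ^ n.choose (E.d + 1), ξ n⁆)⁻¹)
        (by omega) hlam (by omega) (hEpow.inv.mul hξ) hH
      set Wf := Drec (fun n => (E.w ^ n.choose E.d)⁻¹ * ξ n)
        (fun n => (cnj ((E.w ^ n.choose E.d)⁻¹) ⁅(E.w⁻¹) ^ n.choose (E.d + 1), ξ n⁆)⁻¹) with hWf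
      have hkey : ∀ n, Drec ξ (fun n => E.w ^ n.choose E.d) n
          = E.w ^ n.choose (E.d + 1) * (Wf n)⁻¹ := by
        intro n
        induction n with
        | zero =>
          rw [hWf]
          show (1 : L) = E.w ^ (Nat.choose 0 (E.d + 1)) * ((1 : L))⁻¹
          simp [Nat.choose_zero_succ]
        | succ n ihn =>
          show cnj (ξ n) (Drec ξ (fun n => E.w ^ n.choose E.d) n) * E.w ^ n.choose E.d = _
          rw [ihn, pow_choose_pascal]
          show _ = E.w ^ n.choose E.d * E.w ^ n.choose (E.d + 1) *
            (cnj ((E.w ^ n.choose E.d)⁻¹ * ξ n) (Wf n) *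
              (cnj ((E.w ^ n.choose E.d)⁻¹) ⁅(E.w⁻¹) ^ n.choose (E.d + 1), ξ n⁆)⁻¹)⁻¹
          simp only [cnj, commutatorElement_def, inv_pow]
          group
      have hA₁ : Cor (PO lam σ ls) (Drec ξ (fun n => E.w ^ n.choose E.d)) := by
        have hsingle : Cor (PO lam σ ls) (fun n => E.w ^ n.choose (E.d + 1)) := by
          refine (Cor.single E.w (E.d + 1) E.lv (fun _ => 1) hEw IsX.one
            ⟨by omega, by omega, by omega⟩).congr (fun n => by simp [cnj])
        exact (hsingle.mul ((hW.mono (PO_mono le_rfl le_rfl (by omega))).inv)).congr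
          (fun n => (hkey n).symm)
      have hassemble : ∀ n, Drec ξ (evalL (E :: l')) n
          = Drec ξ (fun n => E.w ^ n.choose E.d) n
            * Drec (fun n => (E.w ^ n.choose E.d)⁻¹ * ξ n)
                (fun n => ⁅(E.w⁻¹) ^ n.choose E.d, E.χ n⁆) n
            * Drec (fun n => (E.w ^ n.choose E.d * ⁅(E.w⁻¹) ^ n.choose E.d, E.χ n⁆)⁻¹ * ξ n)
                (evalL l') n := by
        intro n
        have e1 : ∀ m, evalL (E :: l') m
            = (E.w ^ m.choose E.d * ⁅(E.w⁻¹) ^ m.choose E.d, E.χ m⁆) * evalL l' m := by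
          intro m
          rw [evalL_cons, ← hβdef]
        rw [Drec_congr e1 n]
        rw [Drec_mul_eq ξ (fun m => E.w ^ m.choose E.d * ⁅(E.w⁻¹) ^ m.choose E.d, E.χ m⁆)
          (evalL l')]
        rw [Drec_mul_eq ξ (fun m => E.w ^ m.choose E.d)
          (fun m => ⁅(E.w⁻¹) ^ m.choose E.d, E.χ m⁆)]
      exact ((hA₁.mul (hβpart.mono (PO_mono le_rfl le_rfl (by omega)))).mul htail).congr
        (fun n => (hassemble n).symm)

/-- deviation of `⁅u, a^n⁆` from `⁅u,a⁆^n`. -/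
theorem ET2 {J : ℕ} (hJ : lowerCentralSeries L J = ⊥) :
    ∀ fl α : ℕ, ∀ u a : L, J ≤ α + 1 + fl → u ∈ lowerCentralSeries L α →
    Cor (PO (α+1) 0 (α+2)) (fun n => (⁅u, a⁆ ^ n)⁻¹ * ⁅u, a ^ n⁆) := by
  intro fl
  induction fl with
  | zero =>
    intro α u a hfl hu
    have hv : ⁅u, a⁆ = 1 := trivial_of_deep hJ hfl (comm_mem_lcs' hu (mem_lcs_zero a) (by omega))
    have hcomm : Commute u a := commutatorElement_eq_one_iff_commute.mp hv
    refine (Cor.one _).congr (fun n => ?_)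
    rw [hv, (hcomm.pow_right n).commutator_eq]
    simp
  | succ fl IHfl =>
    intro α u a hfl hu
    by_cases hdeep : J ≤ α + 1
    · have hv : ⁅u, a⁆ = 1 :=
        trivial_of_deep hJ hdeep (comm_mem_lcs' hu (mem_lcs_zero a) (by omega))
      have hcomm : Commute u a := commutatorElement_eq_one_iff_commute.mp hv
      refine (Cor.one _).congr (fun n => ?_)
      rw [hv, (hcomm.pow_right n).commutator_eq]
      simp
    · have hvmem : ⁅u, a⁆ ∈ lowerCentralSeries L (α + 1) :=
        comm_mem_lcs' hu (mem_lcs_zero a) (by omega)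
      have hv2 : ⁅⁅u, a⁆⁻¹, a⁆ ∈ lowerCentralSeries L (α + 2) :=
        comm_mem_lcs' (inv_mem hvmem) (mem_lcs_zero a) (by omega)
      -- inner deviation at level α+1
      have hinner := IHfl (α + 1) (⁅u, a⁆⁻¹) a (by omega) (inv_mem hvmem)
      have hlead : Cor (P0 (α+1) 0 (α+2)) (fun n => ⁅⁅u, a⁆⁻¹, a⁆ ^ n) := by
        refine (Cor.single ⁅⁅u, a⁆⁻¹, a⁆ 1 (α+2) (fun _ => 1) hv2 IsX.one
          ⟨by omega, by omega⟩).congr (fun n => by simp [cnj])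
      have hg : Cor (P0 (α+1) 0 (α+2)) (fun n => ⁅⁅u, a⁆⁻¹, a ^ n⁆) := by
        refine ((hlead.mul (hinner.mono ?_)).congr (fun n => ?_))
        · intro d lv ⟨h1, h2, h3⟩
          exact ⟨by omega, by omega⟩
        · show ⁅⁅u, a⁆⁻¹, a⁆ ^ n * ((⁅⁅u, a⁆⁻¹, a⁆ ^ n)⁻¹ * ⁅⁅u, a⁆⁻¹, a ^ n⁆) = _
          group
      have hsolve := (ENGINE hJ fl).2 (α + 1) 0 (α + 2) (fun _ => ⁅u, a⁆⁻¹)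
        (fun n => ⁅⁅u, a⁆⁻¹, a ^ n⁆) (by omega) (by omega) (by omega)
        (IsX.const _) hg
      have hrec : ∀ n, (⁅u, a⁆ ^ n)⁻¹ * ⁅u, a ^ n⁆
          = Drec (fun _ => ⁅u, a⁆⁻¹) (fun n => ⁅⁅u, a⁆⁻¹, a ^ n⁆) n := by
        refine eq_Drec (f := fun n => (⁅u, a⁆ ^ n)⁻¹ * ⁅u, a ^ n⁆) ?_ ?_
        · simp
        · intro n
          show (⁅u, a⁆ ^ (n+1))⁻¹ * ⁅u, a ^ (n+1)⁆ = _
          rw [pow_succ a n, comm_mul_right, pow_succ ⁅u, a⁆]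
          show _ = cnj (⁅u, a⁆⁻¹) ((⁅u, a⁆ ^ n)⁻¹ * ⁅u, a ^ n⁆) * ⁅⁅u, a⁆⁻¹, a ^ n⁆
          simp only [cnj, commutatorElement_def]
          group
      exact hsolve.congr (fun n => (hrec n).symm)

/-- deviation of `(x*y)^n` from `x^n * y^n`. -/
theorem ET1 {J : ℕ} (hJ : lowerCentralSeries L J = ⊥) (fl ℓ : ℕ) (x y : L)
    (hfl : J ≤ ℓ + 1 + fl) (hℓ : 1 ≤ ℓ) (hx : x ∈ lowerCentralSeries L ℓ)
    (hy : y ∈ lowerCentralSeries L ℓ) :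
    Cor (PO ℓ 0 (ℓ+1)) (fun n => (x ^ n * y ^ n)⁻¹ * (x * y) ^ n) := by
  have hxy : ⁅x⁻¹, y⁻¹⁆ ∈ lowerCentralSeries L (2*ℓ+1) :=
    comm_mem_lcs' (inv_mem hx) (inv_mem hy) (by omega)
  have hdev := ET2 hJ fl (ℓ - 1 + 1) x⁻¹ y⁻¹ (by omega)
    (by simpa [Nat.sub_add_cancel hℓ] using inv_mem hx)
  rw [Nat.sub_add_cancel hℓ] at hdev
  have hlead : Cor (P0 ℓ 0 (ℓ+1)) (fun n => ⁅x⁻¹, y⁻¹⁆ ^ n) := by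
    refine (Cor.single ⁅x⁻¹, y⁻¹⁆ 1 (2*ℓ+1) (fun _ => 1) hxy IsX.one
      ⟨by omega, by omega⟩).congr (fun n => by simp [cnj])
  have hdev' : Cor (P0 ℓ 0 (ℓ+1)) (fun n => ⁅x⁻¹, y⁻¹ ^ n⁆) := by
    refine ((hlead.mul (hdev.mono ?_)).congr (fun n => ?_))
    · intro d lv ⟨h1, h2, h3⟩
      exact ⟨by omega, by omega⟩
    · show ⁅x⁻¹, y⁻¹⁆ ^ n * ((⁅x⁻¹, y⁻¹⁆ ^ n)⁻¹ * ⁅x⁻¹, y⁻¹ ^ n⁆) = _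
      group
  have hh : Cor (P0 ℓ 0 (ℓ+1)) (fun n => (cnj y⁻¹ ⁅(y⁻¹) ^ n, x⁻¹⁆)⁻¹) := by
    refine ((hdev'.cnjfun (IsX.const y⁻¹)).congr (fun n => ?_))
    rw [← commutatorElement_inv, cnj_inv]
  have hsolve := (ENGINE hJ fl).2 ℓ 0 (ℓ + 1) (fun _ => y⁻¹ * x⁻¹)
    (fun n => (cnj y⁻¹ ⁅(y⁻¹) ^ n, x⁻¹⁆)⁻¹) (by omega) hℓ (by omega)
    (IsX.const _) hh
  refine (hsolve.inv.congr (fun n => ?_))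
  have hrec : ∀ n, ((x ^ n * y ^ n)⁻¹ * (x * y) ^ n)⁻¹
      = Drec (fun _ => y⁻¹ * x⁻¹) (fun n => (cnj y⁻¹ ⁅(y⁻¹) ^ n, x⁻¹⁆)⁻¹) n := by
    refine eq_Drec ?_ ?_
    · simp
    · intro n
      show (((x ^ (n+1) * y ^ (n+1))⁻¹ * (x * y) ^ (n+1)))⁻¹ = _
      rw [pow_succ x n, pow_succ y n, pow_succ (x*y) n]
      show _ = cnj (y⁻¹ * x⁻¹) (((x ^ n * y ^ n)⁻¹ * (x * y) ^ n)⁻¹)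
        * (cnj y⁻¹ ⁅(y⁻¹) ^ n, x⁻¹⁆)⁻¹
      simp only [cnj, commutatorElement_def, inv_pow]
      group
  rw [← hrec n]
  group

end Engine2

section Core

/-- `p^(s-v) ∣ C(p^s, d)` where `v = v_p(d)`. -/
theorem pow_dvd_choose_pow {p s d : ℕ} (hp : p.Prime) (hd1 : 1 ≤ d) (hds : d ≤ p ^ s)
    (hvs : d.factorization p ≤ s) : p ^ (s - d.factorization p) ∣ (p ^ s).choose d := by
  set v := d.factorization p with hv
  set u := d / p ^ v with hu
  have hd0 : d ≠ 0 := by omega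
  have hdecomp : p ^ v * u = d := Nat.ordProj_mul_ordCompl_eq_self d p
  have hundvd : ¬ p ∣ u := Nat.not_dvd_ordCompl hp hd0
  -- p^s ∣ C(p^s, d) * d
  have key : p ^ s * (p ^ s - 1).choose (d - 1) = (p ^ s).choose d * d := by
    have h1 : (p ^ s - 1) + 1 = p ^ s := by
      have : 1 ≤ p ^ s := Nat.one_le_pow _ _ hp.pos
      omega
    have h2 : (d - 1) + 1 = d := by omega
    have := Nat.add_one_mul_choose_eq (p ^ s - 1) (d - 1)
    simpa [Nat.succ_eq_add_one, h1, h2] using this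
  have hdvd : p ^ s ∣ (p ^ s).choose d * d := ⟨_, key.symm⟩
  have hsplit : p ^ s = p ^ v * p ^ (s - v) := by
    rw [← pow_add]
    congr 1
    omega
  have hdvd2 : p ^ v * p ^ (s - v) ∣ p ^ v * ((p ^ s).choose d * u) := by
    have e1 : p ^ v * ((p ^ s).choose d * u) = (p ^ s).choose d * d := by
      rw [← hdecomp]
      ring
    rw [e1, ← hsplit]
    exact hdvd
  have hpv : 0 < p ^ v := Nat.pow_pos hp.pos
  have hdvd3 : p ^ (s - v) ∣ (p ^ s).choose d * u :=
    (mul_dvd_mul_iff_left (by omega : (p:ℕ) ^ v ≠ 0)).mp hdvd2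
  have hcop : Nat.Coprime (p ^ (s - v)) u :=
    Nat.Coprime.pow_left _ ((Nat.Prime.coprime_iff_not_dvd hp).mpr hundvd)
  exact (Nat.Coprime.dvd_of_dvd_mul_right hcop) hdvd3

theorem main {L : Type*} [Group L] (p e s c k ℓ : ℕ) (hp : p.Prime)
    (hc : 1 ≤ c) (hcℓ : c ≤ ℓ) (hse : e ≤ s)
    (hbot : lowerCentralSeries L (c + k) = ⊥)
    (hcomm : ∀ h ∈ lowerCentralSeries L (c - 1), ∀ x : L, ⁅h, x ^ p ^ e⁆ = 1)
    (hkill : ∀ d lv : ℕ, 1 ≤ d → ℓ + 1 ≤ lv → ℓ + d ≤ lv + 1 →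
      ∀ w ∈ lowerCentralSeries L lv, w ^ ((p ^ s).choose d) = 1)
    (g : L) (hg : g ∈ lowerCentralSeries L ℓ) : g ^ p ^ s = 1 := by
  classical
  have hℓ1 : 1 ≤ ℓ := le_trans hc hcℓ
  set J := c + k with hJdef
  have hsucc : lowerCentralSeries L ℓ
      = ⁅lowerCentralSeries L (ℓ-1), (⊤ : Subgroup L)⁆ := by
    conv_lhs => rw [show ℓ = (ℓ-1)+1 by omega]
    exact lcs_succ_comm _
  have hset : Subgroup.closure {g : L | ∃ g₁ ∈ lowerCentralSeries L (ℓ-1), ∃ g₂ ∈ (⊤ : Subgroup L), ⁅g₁, g₂⁆ = g}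
      = lowerCentralSeries L ℓ := (hsucc.trans (Subgroup.commutator_def _ _)).symm
  have key : ∀ g ∈ lowerCentralSeries L ℓ, ∃ M f : ℕ → L,
      (∀ n, g ^ n = M n * f n) ∧ IsX M ∧ M (p ^ s) = 1 ∧ Cor (PO ℓ 0 (ℓ+1)) f := by
    intro g hg
    rw [hsucc, Subgroup.commutator_def] at hg
    induction hg using Subgroup.closure_induction with
    | mem x hx =>
      obtain ⟨h, hh, a, -, rfl⟩ := hx
      have hvmem : ⁅h, a⁆ ∈ lowerCentralSeries L ℓ :=
        comm_mem_lcs' hh (mem_lcs_zero a) (by omega)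
      have hdev := ET2 hbot J (ℓ - 1) h a (by omega) hh
      rw [show ℓ - 1 + 1 = ℓ by omega, show ℓ - 1 + 2 = ℓ + 1 by omega] at hdev
      refine ⟨fun n => ⁅h, a ^ n⁆, fun n => ((⁅h, a⁆ ^ n)⁻¹ * ⁅h, a ^ n⁆)⁻¹, ?_, ?_, ?_, hdev.inv⟩
      · intro n
        group
      · have hpow : IsX (fun n => ⁅h, a⁆ ^ n.choose 1) :=
          IsX.pow ⁅h, a⁆ 1 ℓ hvmem (by omega)
        have hdevX : IsX (fun n => (⁅h, a⁆ ^ n)⁻¹ * ⁅h, a ^ n⁆) := hdev.isX (PO_isX hℓ1)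
        refine (hpow.mul hdevX).congr (fun n => ?_)
        rw [Nat.choose_one_right]
        group
      · have ha : (a ^ p ^ (s - e)) ^ p ^ e = a ^ p ^ s := by
          rw [← pow_mul, ← pow_add, Nat.sub_add_cancel hse]
        show ⁅h, a ^ p ^ s⁆ = 1
        rw [← ha]
        exact hcomm h (lowerCentralSeries_antitone (by omega) hh) _
    | one =>
      exact ⟨fun _ => 1, fun _ => 1, fun n => by simp, IsX.one, rfl, Cor.one _⟩
    | mul x y hxm hym Qx Qy =>
      obtain ⟨Mx, fx, hx1, hx2, hx3, hx4⟩ := Qx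
      obtain ⟨My, fy, hy1, hy2, hy3, hy4⟩ := Qy
      have hxℓ : x ∈ lowerCentralSeries L ℓ := hset ▸ hxm
      have hyℓ : y ∈ lowerCentralSeries L ℓ := hset ▸ hym
      have hdev := ET1 hbot J ℓ x y (by omega) hℓ1 hxℓ hyℓ
      refine ⟨fun n => Mx n * My n,
        fun n => cnj ((My n)⁻¹) (fx n) * fy n * ((x ^ n * y ^ n)⁻¹ * (x * y) ^ n),
        ?_, hx2.mul hy2, by show Mx (p^s) * My (p^s) = 1; rw [hx3, hy3, one_mul],
        ((hx4.cnjfun hy2.inv).mul hy4).mul hdev⟩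
      intro n
      have e2 : Mx n * My n * (cnj ((My n)⁻¹) (fx n) * fy n * ((x ^ n * y ^ n)⁻¹ * (x * y) ^ n))
          = (Mx n * fx n) * (My n * fy n) * ((x ^ n * y ^ n)⁻¹ * (x * y) ^ n) := by
        simp only [cnj]
        group
      rw [e2, ← hx1, ← hy1]
      group
    | inv x hxm Qx =>
      obtain ⟨Mx, fx, hx1, hx2, hx3, hx4⟩ := Qx
      refine ⟨fun n => (Mx n)⁻¹, fun n => cnj (Mx n) ((fx n)⁻¹), ?_, hx2.inv,
        by show (Mx (p^s))⁻¹ = 1; rw [hx3]; simp, hx4.inv.cnjfun hx2⟩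
      intro n
      have e3 : (Mx n)⁻¹ * cnj (Mx n) ((fx n)⁻¹) = (Mx n * fx n)⁻¹ := by
        simp only [cnj]
        group
      rw [e3, ← hx1, inv_pow]
  obtain ⟨M, f, h1, h2, h3, h4⟩ := key g hg
  rw [h1 (p ^ s), h3, one_mul]
  obtain ⟨l, hal, hev⟩ := h4
  rw [hev]
  clear hev h1
  induction l with
  | nil => simp
  | cons a l ihl =>
    rw [evalL_cons, ihl (fun b hb => hal b (List.mem_cons_of_mem a hb)), mul_one]
    obtain ⟨hw, hχ, hd1, hd2, hd3⟩ := hal a (by simp)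
    have := hkill a.d a.lv hd1 hd3 (by omega) a.w hw
    rw [Atom.eval, this]
    simp


theorem core {L : Type*} [Group L] (p e k c : ℕ) (hp : p.Prime)
    (he : 1 ≤ e) (hk : 1 ≤ k) (hc : 1 ≤ c)
    (hbot : lowerCentralSeries L (c + k) = ⊥)
    (hcomm : ∀ h ∈ lowerCentralSeries L (c - 1), ∀ x : L, ⁅h, x ^ p ^ e⁆ = 1)
    (g : L) (hg : g ∈ lowerCentralSeries L c) :
    g ^ p ^ (e + Nat.log p k * (k - 1)) = 1 := by
  set m := Nat.log p k with hm
  have hp2 : 2 ≤ p := hp.two_le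
  -- descending induction, phrased over t = number of levels above the bottom
  have claim : ∀ t, t ≤ k → ∀ g ∈ lowerCentralSeries L (c + k - t),
      g ^ p ^ (if t = 0 then 0 else e + m * (t - 1)) = 1 := by
    intro t
    induction t with
    | zero =>
      intro _ g hg
      have : g ∈ (⊥ : Subgroup L) := by
        rw [← hbot]
        simpa using hg
      simp [Subgroup.mem_bot.mp this]
    | succ t ih =>
      intro ht g hg
      rw [if_neg (Nat.succ_ne_zero t)]
      have hstep : e + m * (t + 1 - 1) = e + m * t := by simp
      rw [hstep]
      refine main p e (e + m * t) c k (c + k - (t + 1)) hp hc (by omega) (by omega)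
        hbot hcomm ?_ g hg
      intro d lv hd1 hlv1 hlvd w hw
      by_cases hdeep : c + k ≤ lv
      · have : w ∈ (⊥ : Subgroup L) := by
          rw [← hbot]
          exact lowerCentralSeries_antitone hdeep hw
        simp [Subgroup.mem_bot.mp this]
      · push_neg at hdeep
        rcases Nat.eq_zero_or_pos t with ht0 | ht0
        · exfalso
          omega
        · have hw1 : w ∈ lowerCentralSeries L (c + k - t) := by
            refine lowerCentralSeries_antitone ?_ hw
            omega
          have hexpw := ih (by omega) w hw1
          have hdexp : (if t = 0 then 0 else e + m * (t - 1)) = e + m * t - m := by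
            rw [if_neg (by omega)]
            have h2 : m * t = m * (t - 1) + m := by
              conv_lhs => rw [show t = (t - 1) + 1 by omega]
              ring
            omega
          rw [hdexp] at hexpw
          have hdk : d ≤ k := by omega
          have hk0 : k ≠ 0 := by omega
          have hvm : d.factorization p ≤ m := by
            have hpv : p ^ d.factorization p ∣ d := Nat.ordProj_dvd d p
            have hple : p ^ d.factorization p ≤ k :=
              le_trans (Nat.le_of_dvd (by omega) hpv) hdk
            rw [hm]
            exact (Nat.le_log_iff_pow_le (by omega) hk0).mpr hple
          have hmt : m ≤ m * t := Nat.le_mul_of_pos_right m ht0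
          have hds : d ≤ p ^ (e + m * t) := by
            have h1 : k < p ^ (m + 1) := Nat.lt_pow_succ_log_self (by omega) k
            have h2 : p ^ (m + 1) ≤ p ^ (e + m * t) := Nat.pow_le_pow_right (by omega) (by omega)
            omega
          have hdvd := pow_dvd_choose_pow hp hd1 hds (le_trans hvm (by omega))
          have hdvd2 : p ^ (e + m * t - m) ∣ (p ^ (e + m * t)).choose d := by
            refine dvd_trans ?_ hdvd
            exact Nat.pow_dvd_pow p (by omega)
          obtain ⟨q, hq⟩ := hdvd2
          rw [hq, pow_mul, hexpw, one_pow]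
  have hgk : g ∈ lowerCentralSeries L (c + k - k) := by
    have : c + k - k = c := by omega
    rwa [this]
  have := claim k le_rfl g hgk
  rwa [if_neg (by omega)] at this

end Core


end NilMult

open scoped commutatorElement

/-- Theorem 3.2: if `G = F/R` is a `p`-group of class at most `k` and exponent
dividing `p^e` (i.e. `γ_{k+1}(F) ≤ R` and `x^(p^e) ∈ R` for all `x`), then every
`g ∈ γ_{c+1}(F)` satisfies `g^(p^(e + m(k-1))) ∈ [R, cF]`, where `m = ⌊log_p k⌋`;
that is, the exponent of `γ_{c+1}(F)/[R, cF]` divides `p^(e + m(k-1))`.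
(Here `γ_{c+1}(F) = lowerCentralSeries F c`.) -/
theorem pow_mem_iteratedCommutator_of_mem_lowerCentralSeries {F : Type*} [Group F]
    [IsFreeGroup F] (R : Subgroup F) [R.Normal] (p e k c : ℕ) (hp : p.Prime)
    (he : 1 ≤ e) (hk : 1 ≤ k) (hc : 1 ≤ c)
    (hnil : (⊤ : Subgroup F).lowerCentralSeries k ≤ R)
    (hexp : ∀ x : F, x ^ (p ^ e) ∈ R)
    (g : F) (hg : g ∈ (⊤ : Subgroup F).lowerCentralSeries c) :
    g ^ (p ^ (e + Nat.log p k * (k - 1))) ∈ iteratedCommutator R c := by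
  classical
  letI : (iteratedCommutator R c).Normal := NilMult.itC_normal R c
  set N := iteratedCommutator R c with hN
  let π := QuotientGroup.mk' N
  have hπsurj : Function.Surjective π := QuotientGroup.mk'_surjective N
  have hker : π.ker = N := QuotientGroup.ker_mk' N
  have hmem_iff : ∀ y : F, π y = 1 ↔ y ∈ N := by
    intro y
    exact QuotientGroup.eq_one_iff y
  -- lower central series of the quotient vanishes at c + k
  have hbot : NilMult.lowerCentralSeries (F ⧸ N) (c + k) = ⊥ := by
    rw [← NilMult.lcs_map_surjective π hπsurj (c + k)]
    rw [Subgroup.map_eq_bot_iff, hker]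
    have h1 : NilMult.lowerCentralSeries F (c + k) ≤ NilMult.lowerCentralSeries F (k + c) := by
      rw [Nat.add_comm]
    exact le_trans h1 (NilMult.lcs_le_itC R k hnil c)
  -- commutation property in the quotient
  have hcomm : ∀ h ∈ NilMult.lowerCentralSeries (F ⧸ N) (c - 1), ∀ x : F ⧸ N, ⁅h, x ^ p ^ e⁆ = 1 := by
    intro h hh x
    rw [← NilMult.lcs_map_surjective π hπsurj (c - 1)] at hh
    obtain ⟨h₀, hh₀, rfl⟩ := hh
    obtain ⟨x₀, rfl⟩ := hπsurj x
    have : (π x₀) ^ p ^ e = π (x₀ ^ p ^ e) := by rw [map_pow]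
    rw [this, ← map_commutatorElement]
    rw [hmem_iff]
    have hr : x₀ ^ p ^ e ∈ iteratedCommutator R 0 := hexp x₀
    have := Subgroup.commutator_mem_commutator hh₀ hr
    have h2 := NilMult.comm_lcs_itC R (c - 1) 0 this
    have harith : c - 1 + 0 + 1 = c := by omega
    rwa [harith] at h2
  have hgq : π g ∈ NilMult.lowerCentralSeries (F ⧸ N) c := by
    rw [← NilMult.lcs_map_surjective π hπsurj c]
    exact ⟨g, hg, rfl⟩
  have := NilMult.core p e k c hp he hk hc hbot hcomm (π g) hgq
  rw [← map_pow, hmem_iff] at this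
  exact this
end

section
/- Let p be a prime, e ≥ 1, k ≥ 1 integers, and set m = ⌊log_p k⌋. Let F be a free group and R a normal subgroup of F such that γ_{k+1}(F) ≤ R and x^(p^e) ∈ R for every x ∈ F. Then for every g in the commutator subgroup ⁅F, F⁆, one has g^(p^(e+m(k−1))) ∈ ⁅R, F⁆. -/
open Subgroup
open scoped commutatorElement

section Arith

theorem choose_mul_self_eq (t r : ℕ) :
    (t + 1) * Nat.choose t r = Nat.choose (t + 1) (r + 1) * (r + 1) :=
  Nat.add_one_mul_choose_eq t r

/-- `p^(t - log_p r) ∣ C(p^t, r)` for `1 ≤ r`. -/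
theorem pow_sub_log_dvd_choose_pow {p : ℕ} (hp : p.Prime) (t r : ℕ) (hr : 1 ≤ r) :
    p ^ (t - Nat.log p r) ∣ (p ^ t).choose r := by
  have hr0 : r ≠ 0 := by omega
  set a := r.factorization p with ha
  have hpa : p ^ a ∣ r := Nat.ordProj_dvd r p
  have hale : a ≤ Nat.log p r := by
    have h1 : p ^ a ≤ r := Nat.le_of_dvd (by omega) hpa
    exact (Nat.le_log_iff_pow_le hp.one_lt hr0).mpr h1
  -- key identity : p^t * C(p^t - 1, r - 1) = C(p^t, r) * r
  have hpt : 1 ≤ p ^ t := Nat.one_le_pow _ _ hp.pos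
  have key : p ^ t * Nat.choose (p ^ t - 1) (r - 1) = (p ^ t).choose r * r := by
    have h := Nat.add_one_mul_choose_eq (p ^ t - 1) (r - 1)
    have e1 : p ^ t - 1 + 1 = p ^ t := by omega
    have e2 : r - 1 + 1 = r := by omega
    rw [e1, e2] at h
    exact h
  have hdvd : p ^ t ∣ (p ^ t).choose r * r := ⟨_, key.symm⟩
  -- write r = p^a * r'
  obtain ⟨r', hr'⟩ := hpa
  have hpr' : ¬ p ∣ r' := by
    intro hd
    obtain ⟨r'', rfl⟩ := hd
    have : p ^ (a + 1) ∣ r := by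
      rw [hr']; ring_nf; exact ⟨r'', by ring⟩
    have := (Nat.Prime.pow_dvd_iff_le_factorization hp hr0).mp this
    omega
  by_cases hta : a ≤ t
  · have hco : (p ^ (t - a)).Coprime r' := by
      exact Nat.Coprime.pow_left _ ((Nat.Prime.coprime_iff_not_dvd hp).mpr hpr')
    have h2 : p ^ (t - a) * p ^ a ∣ (p ^ t).choose r * (p ^ a * r') := by
      rw [← hr', ← pow_add]
      have : t - a + a = t := by omega
      rw [this]; exact hdvd
    have h3 : p ^ (t - a) ∣ (p ^ t).choose r * r' := by
      have h4 : p ^ (t - a) * p ^ a ∣ ((p ^ t).choose r * r') * p ^ a := by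
        calc p ^ (t - a) * p ^ a ∣ (p ^ t).choose r * (p ^ a * r') := h2
        _ = ((p ^ t).choose r * r') * p ^ a := by ring
      exact (Nat.mul_dvd_mul_iff_right (Nat.pow_pos hp.pos)).mp h4
    have h5 : p ^ (t - a) ∣ (p ^ t).choose r := hco.dvd_of_dvd_mul_right h3
    exact dvd_trans (pow_dvd_pow p (by omega)) h5
  · have hz : t - Nat.log p r = 0 := by omega
    rw [hz, pow_zero]
    exact one_dvd _

end Arith

section ThreeSubgroups

variable {G : Type*} [Group G]

theorem three_subgroups_le {A B C N : Subgroup G} [N.Normal]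
    (h1 : ⁅⁅B, C⁆, A⁆ ≤ N) (h2 : ⁅⁅C, A⁆, B⁆ ≤ N) : ⁅⁅A, B⁆, C⁆ ≤ N := by
  let f := QuotientGroup.mk' N
  have hker : f.ker = N := QuotientGroup.ker_mk' N
  have h1' : ⁅⁅B.map f, C.map f⁆, A.map f⁆ = ⊥ := by
    rw [← Subgroup.map_commutator, ← Subgroup.map_commutator,
      Subgroup.map_eq_bot_iff, hker]
    exact h1
  have h2' : ⁅⁅C.map f, A.map f⁆, B.map f⁆ = ⊥ := by
    rw [← Subgroup.map_commutator, ← Subgroup.map_commutator,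
      Subgroup.map_eq_bot_iff, hker]
    exact h2
  have h3 := Subgroup.commutator_commutator_eq_bot_of_rotate h1' h2'
  rw [← Subgroup.map_commutator, ← Subgroup.map_commutator,
    Subgroup.map_eq_bot_iff, hker] at h3
  exact h3

theorem lcs_comm_le (a b : ℕ) :
    ⁅(⊤ : Subgroup G).lowerCentralSeries a, (⊤ : Subgroup G).lowerCentralSeries b⁆ ≤ (⊤ : Subgroup G).lowerCentralSeries (a + b + 1) := by
  induction b generalizing a with
  | zero =>
    show ⁅(⊤ : Subgroup G).lowerCentralSeries a, ⊤⁆ ≤ _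
    exact le_of_eq rfl
  | succ b ih =>
    have hstep : (⊤ : Subgroup G).lowerCentralSeries (b + 1) = ⁅(⊤ : Subgroup G).lowerCentralSeries b, ⊤⁆ := rfl
    rw [hstep, Subgroup.commutator_comm]
    refine three_subgroups_le ?_ ?_
    · rw [Subgroup.commutator_comm (⊤ : Subgroup G)]
      have : ⁅(⊤ : Subgroup G).lowerCentralSeries a, (⊤ : Subgroup G)⁆ = (⊤ : Subgroup G).lowerCentralSeries (a + 1) := rfl
      rw [this]
      have := ih (a + 1)
      have heq : a + 1 + b + 1 = a + (b+1) + 1 := by omega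
      rw [heq] at this
      exact this
    · calc ⁅⁅(⊤ : Subgroup G).lowerCentralSeries a, (⊤ : Subgroup G).lowerCentralSeries b⁆, (⊤ : Subgroup G)⁆
          ≤ ⁅(⊤ : Subgroup G).lowerCentralSeries (a + b + 1), (⊤ : Subgroup G)⁆ :=
            Subgroup.commutator_mono (ih a) le_rfl
        _ = (⊤ : Subgroup G).lowerCentralSeries (a + b + 2) := rfl
        _ ≤ _ := by
            apply Subgroup.lowerCentralSeries_antitone
            omega

end ThreeSubgroups


namespace PEngine

variable {G : Type*} [Group G]

theorem idA (x z w : G) : ⁅x * z, w⁆ = ⁅z, w⁆ * ⁅⁅z, w⁆⁻¹, x⁆ * ⁅x, w⁆ := by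
  simp only [commutatorElement_def]; group

theorem idB (x u v : G) : ⁅x, u * v⁆ = ⁅x, u⁆ * (⁅x, v⁆ * ⁅⁅x, v⁆⁻¹, u⁆) := by
  simp only [commutatorElement_def]; group

theorem idConj (w x : G) : w⁻¹ * x * w = x * ⁅x⁻¹, w⁻¹⁆ := by
  simp only [commutatorElement_def]; group

def lINT (f : ℕ → ℕ → G) : ℕ → ℕ → G
  | 0, _ => 1
  | m + 1, n => f m n * lINT f m n

def rINT (f : ℕ → ℕ → G) : ℕ → ℕ → G :=
  fun m n => (lINT (fun m' n' => (f m' n')⁻¹) m n)⁻¹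

@[simp] theorem lINT_zero (f : ℕ → ℕ → G) (n : ℕ) : lINT f 0 n = 1 := rfl

theorem lINT_succ (f : ℕ → ℕ → G) (m n : ℕ) : lINT f (m + 1) n = f m n * lINT f m n := rfl

@[simp] theorem rINT_zero (f : ℕ → ℕ → G) (n : ℕ) : rINT f 0 n = 1 := by simp [rINT, lINT]

theorem rINT_succ (f : ℕ → ℕ → G) (m n : ℕ) : rINT f (m + 1) n = rINT f m n * f m n := by
  simp [rINT, lINT_succ, mul_inv_rev]

theorem lINT_congr {f f' : ℕ → ℕ → G} (h : ∀ m n, f m n = f' m n) (m n : ℕ) :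
    lINT f m n = lINT f' m n := by
  have : f = f' := funext fun m => funext fun n => h m n
  rw [this]

theorem lINT_triv {f : ℕ → ℕ → G} (h : ∀ m n, f m n = 1) (m n : ℕ) : lINT f m n = 1 := by
  induction m with
  | zero => rfl
  | succ m ih => rw [lINT_succ, h, ih, one_mul]

theorem lINT_ext {F pre : ℕ → ℕ → G} (h0 : ∀ n, F 0 n = 1)
    (hrec : ∀ m n, F (m + 1) n = pre m n * F m n) : ∀ m n, F m n = lINT pre m n := by
  intro m
  induction m with
  | zero => intro n; simp [h0]
  | succ m ih => intro n; rw [hrec, lINT_succ, ih]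

theorem rINT_ext {F suf : ℕ → ℕ → G} (h0 : ∀ n, F 0 n = 1)
    (hrec : ∀ m n, F (m + 1) n = F m n * suf m n) : ∀ m n, F m n = rINT suf m n := by
  intro m
  induction m with
  | zero => intro n; simp [h0]
  | succ m ih => intro n; rw [hrec, rINT_succ, ih]

theorem INT2 {F pre suf : ℕ → ℕ → G} (h0 : ∀ n, F 0 n = 1)
    (hrec : ∀ m n, F (m + 1) n = pre m n * F m n * suf m n) :
    ∀ m n, F m n = lINT pre m n * rINT suf m n := by
  intro m
  induction m with
  | zero => intro n; simp [h0]
  | succ m ih =>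
    intro n
    rw [hrec, ih, lINT_succ, rINT_succ]
    group

theorem lINT_mul (A B : ℕ → ℕ → G) :
    ∀ m n, lINT (fun m' n' => A m' n' * B m' n') m n
      = lINT A m n * lINT (fun m' n' => (lINT A m' n')⁻¹ * B m' n' * lINT A m' n') m n := by
  intro m
  induction m with
  | zero => intro n; simp
  | succ m ih =>
    intro n
    rw [lINT_succ, lINT_succ, lINT_succ, ih]
    group

theorem lINT_pow (g : G) (r₁ r₂ : ℕ) :
    ∀ m n, lINT (fun m' n' => g ^ (m'.choose r₁ * n'.choose r₂)) m n
      = g ^ (m.choose (r₁ + 1) * n.choose r₂) := by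
  intro m
  induction m with
  | zero => intro n; simp [Nat.choose_eq_zero_of_lt (Nat.succ_pos r₁)]
  | succ m ih =>
    intro n
    rw [lINT_succ, ih, ← pow_add, ← Nat.add_mul]
    rw [← Nat.choose_succ_succ]

variable (M : ℕ → Subgroup G)

inductive Bin (a d s : ℕ) : (ℕ → ℕ → G) → Prop
  | one : Bin a d s fun _ _ => 1
  | pow (g : G) (b r₁ r₂ : ℕ) (hg : g ∈ M b) (hab : a ≤ b) (hd : d ≤ r₁ + r₂)
      (hs : r₁ + r₂ + s ≤ b) : Bin a d s fun m n => g ^ (m.choose r₁ * n.choose r₂)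
  | mul {f₁ f₂} : Bin a d s f₁ → Bin a d s f₂ → Bin a d s fun m n => f₁ m n * f₂ m n

variable {M}

theorem Bin.congr {a d s : ℕ} {f f' : ℕ → ℕ → G} (hb : Bin M a d s f)
    (h : ∀ m n, f m n = f' m n) : Bin M a d s f' := by
  have : f = f' := funext fun m => funext fun n => h m n
  exact this ▸ hb

theorem Bin.triv {a d s : ℕ} {f : ℕ → ℕ → G} (h : ∀ m n, f m n = 1) : Bin M a d s f :=
  (Bin.one ..).congr fun m n => (h m n).symm

theorem Bin.mono {a d s a' d' s' : ℕ} {f : ℕ → ℕ → G} (hb : Bin M a d s f)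
    (ha : a' ≤ a) (hd : d' ≤ d) (hs : s' ≤ s) : Bin M a' d' s' f := by
  induction hb with
  | one => exact Bin.one ..
  | pow g b r₁ r₂ hg hab hdd hss =>
    exact Bin.pow g b r₁ r₂ hg (le_trans ha hab) (le_trans hd hdd) (by omega)
  | mul h₁ h₂ ih₁ ih₂ => exact Bin.mul ih₁ ih₂

theorem Bin.inv {a d s : ℕ} {f : ℕ → ℕ → G} (hb : Bin M a d s f) :
    Bin M a d s (fun m n => (f m n)⁻¹) := by
  induction hb with
  | one => exact Bin.triv fun m n => by simp
  | pow g b r₁ r₂ hg hab hd hs =>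
    exact (Bin.pow g⁻¹ b r₁ r₂ (inv_mem hg) hab hd hs).congr fun m n => by
      rw [inv_pow]
  | mul h₁ h₂ ih₁ ih₂ =>
    exact (Bin.mul ih₂ ih₁).congr fun m n => by rw [mul_inv_rev]

theorem Bin.swap {a d s : ℕ} {f : ℕ → ℕ → G} (hb : Bin M a d s f) :
    Bin M a d s (fun m n => f n m) := by
  induction hb with
  | one => exact Bin.one ..
  | pow g b r₁ r₂ hg hab hd hs =>
    exact (Bin.pow g b r₂ r₁ hg hab (by omega) (by omega)).congr fun m n => by
      rw [Nat.mul_comm]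
  | mul h₁ h₂ ih₁ ih₂ => exact Bin.mul ih₁ ih₂

theorem M_le (hanti : ∀ b : ℕ, M (b + 1) ≤ M b) {a b : ℕ} (h : a ≤ b) : M b ≤ M a := by
  induction b with
  | zero =>
    have ha : a = 0 := by omega
    subst ha; exact le_rfl
  | succ b ih =>
    rcases Nat.lt_or_ge a (b + 1) with hlt | hge
    · exact le_trans (hanti b) (ih (by omega))
    · have : a = b + 1 := by omega
      exact this ▸ le_rfl

theorem Bin.mem (hanti : ∀ b : ℕ, M (b + 1) ≤ M b) {a d s : ℕ} {f : ℕ → ℕ → G}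
    (hb : Bin M a d s f) (m n : ℕ) :
    f m n ∈ M a := by
  induction hb with
  | one => exact one_mem _
  | pow g b r₁ r₂ hg hab hd hs => exact pow_mem (M_le hanti hab hg) _
  | mul h₁ h₂ ih₁ ih₂ => exact mul_mem ih₁ ih₂

/-- conjugation of a function by a function -/
def conjP (c f : ℕ → ℕ → G) : ℕ → ℕ → G := fun m n => (c m n)⁻¹ * f m n * c m n

def GINTS (M : ℕ → Subgroup G) (T φ : ℕ) : Prop :=
  ∀ a d s (f c : ℕ → ℕ → G) (ac dc sc : ℕ), 1 ≤ a → T ≤ a + φ → Bin M a d (s + 1) f →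
    1 ≤ ac → Bin M ac dc sc c → Bin M a (d + 1) s (lINT (conjP c f))

def B4S (M : ℕ → Subgroup G) (T φ : ℕ) : Prop :=
  ∀ (a a' d d' s s' : ℕ) (f f' : ℕ → ℕ → G), 1 ≤ a → 1 ≤ a' → T ≤ a + a' + φ →
    Bin M a d s f → Bin M a' d' s' f' →
    Bin M (a + a') (max d d') (s + s') (fun m n => ⁅f m n, f' m n⁆)

def BX1S (M : ℕ → Subgroup G) (T φ : ℕ) : Prop :=
  ∀ (b : ℕ) (g y : G), 1 ≤ b → T ≤ b + 1 + φ → g ∈ M b →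
    Bin M (b + 1) 1 b (fun m n => ⁅g, y ^ m⁆)

section WithHyps

variable {T : ℕ}
variable (hanti : ∀ b : ℕ, M (b + 1) ≤ M b)
variable (hT : M T = ⊥)

theorem hbot (hanti : ∀ b : ℕ, M (b + 1) ≤ M b) (hT : M T = ⊥) {a : ℕ} {x : G}
    (hTa : T ≤ a) (hx : x ∈ M a) : x = 1 := by
  have := M_le hanti hTa hx
  rw [hT] at this
  exact Subgroup.mem_bot.mp this

theorem lINT_bin {φ : ℕ} (hgint : GINTS M T φ) {a d s : ℕ} {f : ℕ → ℕ → G}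
    (ha : 1 ≤ a) (hφ : T ≤ a + φ) (hf : Bin M a d (s + 1) f) :
    Bin M a (d + 1) s (lINT f) := by
  have h := hgint a d s f (fun _ _ => 1) 1 0 0 ha hφ hf le_rfl (Bin.one ..)
  refine h.congr fun m n => ?_
  exact lINT_congr (fun m n => by simp [conjP]) m n

theorem rINT_bin {φ : ℕ} (hgint : GINTS M T φ) {a d s : ℕ} {f : ℕ → ℕ → G}
    (ha : 1 ≤ a) (hφ : T ≤ a + φ) (hf : Bin M a d (s + 1) f) :
    Bin M a (d + 1) s (rINT f) :=
  (lINT_bin hgint ha hφ hf.inv).inv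

end WithHyps

end PEngine

namespace PEngine

variable {G : Type*} [Group G] {M : ℕ → Subgroup G} {T : ℕ}

theorem gint_step (hanti : ∀ b : ℕ, M (b + 1) ≤ M b) (hT : M T = ⊥) {φ : ℕ}
    (ihpkg : ∀ ψ, ψ < φ → GINTS M T ψ ∧ B4S M T ψ) : GINTS M T φ := by
  intro a d s f c ac dc sc ha hφ hf hac hc
  rcases Nat.eq_zero_or_pos φ with hφ0 | hφpos
  · -- trivial : all values in M a ≤ M T = ⊥
    refine Bin.triv fun m n => ?_
    refine lINT_triv (fun m n => ?_) m n
    have h1 : f m n = 1 := hbot hanti hT (by omega) (hf.mem hanti m n)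
    simp [conjP, h1]
  · obtain ⟨ψ, rfl⟩ : ∃ ψ, φ = ψ + 1 := ⟨φ - 1, by omega⟩
    induction hf generalizing c ac dc sc with
    | one =>
      refine Bin.triv fun m n => ?_
      refine lINT_triv (fun m n => by simp [conjP]) m n
    | @mul f₁ f₂ hf₁ hf₂ ih₁ ih₂ =>
      have hτ₁ : Bin M a (d + 1) s (lINT (conjP c f₁)) := ih₁ c ac dc sc hac hc
      have hc' : Bin M 1 0 0 (fun m n => c m n * lINT (conjP c f₁) m n) :=
        Bin.mul (hc.mono hac (Nat.zero_le _) (Nat.zero_le _))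
          (hτ₁.mono ha (Nat.zero_le _) (Nat.zero_le _))
      have hτ₂ := ih₂ (fun m n => c m n * lINT (conjP c f₁) m n) 1 0 0 le_rfl hc'
      refine (hτ₁.mul hτ₂).congr fun m n => ?_
      have e1 : ∀ m n, conjP c (fun m' n' => f₁ m' n' * f₂ m' n') m n
          = conjP c f₁ m n * conjP c f₂ m n := fun m n => by
        simp only [conjP]; group
      rw [lINT_congr e1 m n, lINT_mul (conjP c f₁) (conjP c f₂) m n]
      congr 1
      refine lINT_congr (fun m n => ?_) m n
      simp only [conjP, mul_inv_rev]
      group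
    | @pow g b r₁ r₂ hg hab hd hs =>
      -- P := the pow function
      set P : ℕ → ℕ → G := fun m n => g ^ (m.choose r₁ * n.choose r₂) with hP
      have hPbin : Bin M a d (s + 1) P := Bin.pow g b r₁ r₂ hg hab hd hs
      have hQ : Bin M (a + 1) d (s + 1)
          (fun m n => ⁅(P m n)⁻¹, (c m n)⁻¹⁆) := by
        have := (ihpkg ψ (by omega)).2 a ac d dc (s + 1) sc _ _ ha hac (by omega)
          hPbin.inv hc.inv
        exact this.mono (by omega) (le_max_left _ _) (by omega)
      -- lINT P closed form
      have hLP : Bin M a (d + 1) s (lINT P) := by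
        refine (Bin.pow g b (r₁ + 1) r₂ hg hab (by omega) (by omega)).congr fun m n => ?_
        exact (lINT_pow g r₁ r₂ m n).symm
      -- inner integrated part
      have hInner : Bin M (a + 1) (d + 1) s
          (lINT (conjP (lINT P) (fun m n => ⁅(P m n)⁻¹, (c m n)⁻¹⁆))) := by
        refine (ihpkg ψ (by omega)).1 (a + 1) d s _ _ a (d + 1) s
          (by omega) (by omega) hQ ha hLP
      refine (hLP.mul (hInner.mono (by omega) le_rfl le_rfl)).congr fun m n => ?_
      have e2 : ∀ m n, conjP c P m n = P m n * ⁅(P m n)⁻¹, (c m n)⁻¹⁆ := fun m n =>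
        idConj (c m n) (P m n)
      rw [lINT_congr e2 m n, lINT_mul P (fun m n => ⁅(P m n)⁻¹, (c m n)⁻¹⁆) m n]
      rfl

end PEngine

namespace PEngine

variable {G : Type*} [Group G] {M : ℕ → Subgroup G} {T : ℕ}

section PPow

variable (hanti : ∀ b : ℕ, M (b + 1) ≤ M b)
variable (hcomm : ∀ a b : ℕ, 1 ≤ a → 1 ≤ b → ∀ g h : G, g ∈ M a → h ∈ M b → ⁅g, h⁆ ∈ M (a + b))
variable (hT : M T = ⊥)

theorem ppow_const (hcomm : ∀ a b : ℕ, 1 ≤ a → 1 ≤ b → ∀ g h : G,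
      g ∈ M a → h ∈ M b → ⁅g, h⁆ ∈ M (a + b)) (b b' : ℕ) (g h : G) (s s' : ℕ) (i₂ j₂ : ℕ)
    (hb : 1 ≤ b) (hb' : 1 ≤ b') (hg : g ∈ M b) (hh : h ∈ M b')
    (hs : i₂ + s ≤ b) (hs' : j₂ + s' ≤ b') (hz : i₂ = 0 ∧ j₂ = 0) :
    Bin M (b + b') (max i₂ j₂) (s + s')
      (fun m n => ⁅g ^ (m.choose 0 * n.choose i₂), h ^ (m.choose 0 * n.choose j₂)⁆) := by
  obtain ⟨rfl, rfl⟩ := hz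
  refine (Bin.pow ⁅g, h⁆ (b + b') 0 0 (hcomm b b' hb hb' g h hg hh) le_rfl le_rfl
    (by omega)).congr fun m n => ?_
  simp [Nat.choose_zero_right]

/-- the inner variable-1 Pascal induction.  `hbase` supplies the case `i₁ = j₁ = 0`. -/
theorem ppow_inner {φ : ℕ} (hφ1 : 1 ≤ φ)
    (ihb4 : B4S M T (φ - 1)) (hgint : GINTS M T φ) (N₂ : ℕ)
    (hbase : ∀ (i₂ j₂ b b' : ℕ) (g h : G) (s s' : ℕ), i₂ + j₂ ≤ N₂ →
      1 ≤ b → 1 ≤ b' → T ≤ b + b' + φ → g ∈ M b → h ∈ M b' →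
      i₂ + s ≤ b → j₂ + s' ≤ b' →
      Bin M (b + b') (max i₂ j₂) (s + s')
        (fun m n => ⁅g ^ (m.choose 0 * n.choose i₂), h ^ (m.choose 0 * n.choose j₂)⁆)) :
    ∀ (N₁ i₁ i₂ j₁ j₂ b b' : ℕ) (g h : G) (s s' : ℕ),
      i₂ + j₂ ≤ N₂ → i₁ + j₁ ≤ N₁ →
      1 ≤ b → 1 ≤ b' → T ≤ b + b' + φ → g ∈ M b → h ∈ M b' →
      i₁ + i₂ + s ≤ b → j₁ + j₂ + s' ≤ b' →
      Bin M (b + b') (max (i₁ + i₂) (j₁ + j₂)) (s + s')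
        (fun m n => ⁅g ^ (m.choose i₁ * n.choose i₂), h ^ (m.choose j₁ * n.choose j₂)⁆) := by
  intro N₁
  induction N₁ with
  | zero =>
    intro i₁ i₂ j₁ j₂ b b' g h s s' hN₂ hN₁ hb hb' hfuel hg hh hs hs'
    obtain ⟨rfl, rfl⟩ : i₁ = 0 ∧ j₁ = 0 := by omega
    have := hbase i₂ j₂ b b' g h s s' hN₂ hb hb' hfuel hg hh (by omega) (by omega)
    exact this.mono le_rfl (by omega) le_rfl
  | succ N₁ ihN₁ =>
    intro i₁ i₂ j₁ j₂ b b' g h s s' hN₂ hN₁ hb hb' hfuel hg hh hs hs'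
    match i₁, j₁ with
    | 0, 0 =>
      have := hbase i₂ j₂ b b' g h s s' hN₂ hb hb' hfuel hg hh (by omega) (by omega)
      exact this.mono le_rfl (by omega) le_rfl
    | 0, (jₐ+1) =>
      -- only the second argument moves in variable 1
      set A : ℕ → ℕ → G := fun m n => g ^ (m.choose 0 * n.choose i₂) with hA
      set B : ℕ → ℕ → G := fun m n => h ^ (m.choose (jₐ+1) * n.choose j₂) with hB
      set Bt : ℕ → ℕ → G := fun m n => h ^ (m.choose jₐ * n.choose j₂) with hBt
      have hK : Bin M (b + b') (max (0 + i₂) (jₐ + j₂)) (s + (s' + 1))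
          (fun m n => ⁅A m n, Bt m n⁆) :=
        ihN₁ 0 i₂ jₐ j₂ b b' g h s (s' + 1) hN₂ (by omega) hb hb' hfuel hg hh
          (by omega) (by omega)
      have hBbin : Bin M b' (jₐ + 1 + j₂) s' B :=
        Bin.pow h b' (jₐ+1) j₂ hh le_rfl le_rfl (by omega)
      have hL : Bin M (b + b') (max (0 + i₂) (jₐ + 1 + j₂) - 1) (s + s' + 1)
          (fun m n => ⁅(⁅A m n, Bt m n⁆)⁻¹, B m n⁆) := by
        have := ihb4 (b + b') b' (max (0 + i₂) (jₐ + j₂)) (jₐ + 1 + j₂)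
          (s + (s' + 1)) s' _ _ (by omega) hb' (by omega) hK.inv hBbin
        exact this.mono (by omega) (by omega) (by omega)
      have hsuf : Bin M (b + b') (max (0 + i₂) (jₐ + 1 + j₂) - 1) (s + s' + 1)
          (fun m n => ⁅A m n, Bt m n⁆ * ⁅(⁅A m n, Bt m n⁆)⁻¹, B m n⁆) :=
        (hK.mono le_rfl (by omega) (by omega)).mul hL
      have hint : Bin M (b + b') (max (0 + i₂) (jₐ + 1 + j₂) - 1 + 1) (s + s')
          (rINT (fun m n => ⁅A m n, Bt m n⁆ * ⁅(⁅A m n, Bt m n⁆)⁻¹, B m n⁆)) :=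
        rINT_bin hgint (by omega) (by omega) hsuf
      have h0 : ∀ n, ⁅A 0 n, B 0 n⁆ = 1 := by
        intro n
        have : B 0 n = 1 := by
          simp [hB, Nat.choose_eq_zero_of_lt (Nat.succ_pos jₐ)]
        rw [this, commutatorElement_one_right]
      have hrec : ∀ m n, ⁅A (m+1) n, B (m+1) n⁆
          = ⁅A m n, B m n⁆ * (⁅A m n, Bt m n⁆ * ⁅(⁅A m n, Bt m n⁆)⁻¹, B m n⁆) := by
        intro m n
        have hAe : A (m+1) n = A m n := by simp [hA]
        have hBe : B (m+1) n = B m n * Bt m n := by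
          simp only [hB, hBt]
          rw [Nat.choose_succ_succ, Nat.add_mul, Nat.add_comm, pow_add]
        rw [hAe, hBe, idB]
      have hFeq : ∀ m n, ⁅A m n, B m n⁆
          = rINT (fun m n => ⁅A m n, Bt m n⁆ * ⁅(⁅A m n, Bt m n⁆)⁻¹, B m n⁆) m n :=
        rINT_ext (F := fun m n => ⁅A m n, B m n⁆) h0 hrec
      refine (hint.congr fun m n => (hFeq m n).symm).mono le_rfl (by omega) le_rfl
    | (iₐ+1), 0 =>
      set A : ℕ → ℕ → G := fun m n => g ^ (m.choose (iₐ+1) * n.choose i₂) with hA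
      set At : ℕ → ℕ → G := fun m n => g ^ (m.choose iₐ * n.choose i₂) with hAt
      set B : ℕ → ℕ → G := fun m n => h ^ (m.choose 0 * n.choose j₂) with hB
      have hK : Bin M (b + b') (max (iₐ + i₂) (0 + j₂)) ((s + 1) + s')
          (fun m n => ⁅At m n, B m n⁆) :=
        ihN₁ iₐ i₂ 0 j₂ b b' g h (s + 1) s' hN₂ (by omega) hb hb' hfuel hg hh
          (by omega) (by omega)
      have hAbin : Bin M b (iₐ + 1 + i₂) s A :=
        Bin.pow g b (iₐ+1) i₂ hg le_rfl le_rfl (by omega)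
      have hL : Bin M (b + b') (max (iₐ + 1 + i₂) (0 + j₂) - 1) (s + s' + 1)
          (fun m n => ⁅(⁅At m n, B m n⁆)⁻¹, A m n⁆) := by
        have := ihb4 (b + b') b (max (iₐ + i₂) (0 + j₂)) (iₐ + 1 + i₂)
          ((s + 1) + s') s _ _ (by omega) hb (by omega) hK.inv hAbin
        exact this.mono (by omega) (by omega) (by omega)
      have hpre : Bin M (b + b') (max (iₐ + 1 + i₂) (0 + j₂) - 1) (s + s' + 1)
          (fun m n => ⁅At m n, B m n⁆ * ⁅(⁅At m n, B m n⁆)⁻¹, A m n⁆) :=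
        (hK.mono le_rfl (by omega) (by omega)).mul hL
      have hint : Bin M (b + b') (max (iₐ + 1 + i₂) (0 + j₂) - 1 + 1) (s + s')
          (lINT (fun m n => ⁅At m n, B m n⁆ * ⁅(⁅At m n, B m n⁆)⁻¹, A m n⁆)) :=
        lINT_bin hgint (by omega) (by omega) hpre
      have h0 : ∀ n, ⁅A 0 n, B 0 n⁆ = 1 := by
        intro n
        have : A 0 n = 1 := by
          simp [hA, Nat.choose_eq_zero_of_lt (Nat.succ_pos iₐ)]
        rw [this, commutatorElement_one_left]
      have hrec : ∀ m n, ⁅A (m+1) n, B (m+1) n⁆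
          = (⁅At m n, B m n⁆ * ⁅(⁅At m n, B m n⁆)⁻¹, A m n⁆) * ⁅A m n, B m n⁆ := by
        intro m n
        have hBe : B (m+1) n = B m n := by simp [hB]
        have hAe : A (m+1) n = A m n * At m n := by
          simp only [hA, hAt]
          rw [Nat.choose_succ_succ, Nat.add_mul, Nat.add_comm, pow_add]
        rw [hBe, hAe, idA]
      have hFeq : ∀ m n, ⁅A m n, B m n⁆
          = lINT (fun m n => ⁅At m n, B m n⁆ * ⁅(⁅At m n, B m n⁆)⁻¹, A m n⁆) m n :=
        lINT_ext (F := fun m n => ⁅A m n, B m n⁆) h0 hrec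
      refine (hint.congr fun m n => (hFeq m n).symm).mono le_rfl (by omega) le_rfl
    | (iₐ+1), (jₐ+1) =>
      set A : ℕ → ℕ → G := fun m n => g ^ (m.choose (iₐ+1) * n.choose i₂) with hA
      set At : ℕ → ℕ → G := fun m n => g ^ (m.choose iₐ * n.choose i₂) with hAt
      set B : ℕ → ℕ → G := fun m n => h ^ (m.choose (jₐ+1) * n.choose j₂) with hB
      set Bt : ℕ → ℕ → G := fun m n => h ^ (m.choose jₐ * n.choose j₂) with hBt
      set D : ℕ := max (iₐ + 1 + i₂) (jₐ + 1 + j₂) with hD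
      have hAbin : Bin M b (iₐ + 1 + i₂) s A :=
        Bin.pow g b (iₐ+1) i₂ hg le_rfl le_rfl (by omega)
      have hBbin : Bin M b' (jₐ + 1 + j₂) s' B :=
        Bin.pow h b' (jₐ+1) j₂ hh le_rfl le_rfl (by omega)
      -- pieces for pre
      have hK₁ : Bin M (b + b') (D - 1) (s + s' + 1)
          (fun m n => ⁅At m n, B m n⁆) := by
        have := ihN₁ iₐ i₂ (jₐ+1) j₂ b b' g h (s + 1) s' hN₂ (by omega) hb hb' hfuel hg hh
          (by omega) (by omega)
        exact this.mono le_rfl (by omega) (by omega)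
      have hK₃ : Bin M (b + b') (D - 1) (s + s' + 1)
          (fun m n => ⁅At m n, Bt m n⁆) := by
        have := ihN₁ iₐ i₂ jₐ j₂ b b' g h (s + 1) (s' + 1) hN₂ (by omega) hb hb' hfuel hg hh
          (by omega) (by omega)
        exact this.mono le_rfl (by omega) (by omega)
      have hL₃ : Bin M (b + b') (D - 1) (s + s' + 1)
          (fun m n => ⁅(⁅At m n, Bt m n⁆)⁻¹, B m n⁆) := by
        have := ihb4 (b + b') b' (D - 1) (jₐ + 1 + j₂) (s + s' + 1) s' _ _
          (by omega) hb' (by omega) hK₃.inv hBbin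
        exact this.mono (by omega) (by omega) (by omega)
      have hW : Bin M (b + b') (D - 1) (s + s' + 1)
          (fun m n => ⁅At m n, B m n⁆ * (⁅At m n, Bt m n⁆ * ⁅(⁅At m n, Bt m n⁆)⁻¹, B m n⁆)) :=
        hK₁.mul (hK₃.mul hL₃)
      have hLW : Bin M (b + b') (D - 1) (s + s' + 1)
          (fun m n => ⁅(⁅At m n, B m n⁆ * (⁅At m n, Bt m n⁆ * ⁅(⁅At m n, Bt m n⁆)⁻¹, B m n⁆))⁻¹,
            A m n⁆) := by
        have := ihb4 (b + b') b (D - 1) (iₐ + 1 + i₂) (s + s' + 1) s _ _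
          (by omega) hb (by omega) hW.inv hAbin
        exact this.mono (by omega) (by omega) (by omega)
      have hpre : Bin M (b + b') (D - 1) (s + s' + 1)
          (fun m n => (⁅At m n, B m n⁆ * (⁅At m n, Bt m n⁆ * ⁅(⁅At m n, Bt m n⁆)⁻¹, B m n⁆))
            * ⁅(⁅At m n, B m n⁆ * (⁅At m n, Bt m n⁆ * ⁅(⁅At m n, Bt m n⁆)⁻¹, B m n⁆))⁻¹, A m n⁆) :=
        hW.mul hLW
      -- pieces for suf
      have hK₂ : Bin M (b + b') (D - 1) (s + s' + 1)
          (fun m n => ⁅A m n, Bt m n⁆) := by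
        have := ihN₁ (iₐ+1) i₂ jₐ j₂ b b' g h s (s' + 1) hN₂ (by omega) hb hb' hfuel hg hh
          (by omega) (by omega)
        exact this.mono le_rfl (by omega) (by omega)
      have hL₂ : Bin M (b + b') (D - 1) (s + s' + 1)
          (fun m n => ⁅(⁅A m n, Bt m n⁆)⁻¹, B m n⁆) := by
        have := ihb4 (b + b') b' (D - 1) (jₐ + 1 + j₂) (s + s' + 1) s' _ _
          (by omega) hb' (by omega) hK₂.inv hBbin
        exact this.mono (by omega) (by omega) (by omega)
      have hsuf : Bin M (b + b') (D - 1) (s + s' + 1)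
          (fun m n => ⁅A m n, Bt m n⁆ * ⁅(⁅A m n, Bt m n⁆)⁻¹, B m n⁆) :=
        hK₂.mul hL₂
      -- integrate
      have hintpre := lINT_bin hgint (show 1 ≤ b + b' by omega) (show T ≤ b + b' + φ by omega) hpre
      have hintsuf := rINT_bin hgint (show 1 ≤ b + b' by omega) (show T ≤ b + b' + φ by omega) hsuf
      have hmulint := hintpre.mul hintsuf
      -- recursion identity
      have h0 : ∀ n, ⁅A 0 n, B 0 n⁆ = 1 := by
        intro n
        have : A 0 n = 1 := by
          simp [hA, Nat.choose_eq_zero_of_lt (Nat.succ_pos iₐ)]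
        rw [this, commutatorElement_one_left]
      have hrec : ∀ m n, ⁅A (m+1) n, B (m+1) n⁆
          = ((⁅At m n, B m n⁆ * (⁅At m n, Bt m n⁆ * ⁅(⁅At m n, Bt m n⁆)⁻¹, B m n⁆))
            * ⁅(⁅At m n, B m n⁆ * (⁅At m n, Bt m n⁆ * ⁅(⁅At m n, Bt m n⁆)⁻¹, B m n⁆))⁻¹, A m n⁆)
            * ⁅A m n, B m n⁆
            * (⁅A m n, Bt m n⁆ * ⁅(⁅A m n, Bt m n⁆)⁻¹, B m n⁆) := by
        intro m n
        have hAe : A (m+1) n = A m n * At m n := by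
          simp only [hA, hAt]
          rw [Nat.choose_succ_succ, Nat.add_mul, Nat.add_comm, pow_add]
        have hBe : B (m+1) n = B m n * Bt m n := by
          simp only [hB, hBt]
          rw [Nat.choose_succ_succ, Nat.add_mul, Nat.add_comm, pow_add]
        rw [hAe, hBe, idA, idB, idB]
        simp only [mul_assoc]
      have hFeq := INT2 (F := fun m n => ⁅A m n, B m n⁆)
        (pre := fun m n => (⁅At m n, B m n⁆ * (⁅At m n, Bt m n⁆ * ⁅(⁅At m n, Bt m n⁆)⁻¹, B m n⁆))
            * ⁅(⁅At m n, B m n⁆ * (⁅At m n, Bt m n⁆ * ⁅(⁅At m n, Bt m n⁆)⁻¹, B m n⁆))⁻¹, A m n⁆)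
        (suf := fun m n => ⁅A m n, Bt m n⁆ * ⁅(⁅A m n, Bt m n⁆)⁻¹, B m n⁆) h0 hrec
      exact ((hmulint.congr fun m n => (hFeq m n).symm).mono le_rfl (by omega) (by omega))

end PPow

end PEngine

namespace PEngine

variable {G : Type*} [Group G] {M : ℕ → Subgroup G} {T : ℕ}

theorem ppow (hcomm : ∀ a b : ℕ, 1 ≤ a → 1 ≤ b → ∀ g h : G,
      g ∈ M a → h ∈ M b → ⁅g, h⁆ ∈ M (a + b))
    {φ : ℕ} (hφ1 : 1 ≤ φ) (ihb4 : B4S M T (φ - 1)) (hgint : GINTS M T φ) :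
    ∀ (N₂ N₁ i₁ i₂ j₁ j₂ b b' : ℕ) (g h : G) (s s' : ℕ),
      i₂ + j₂ ≤ N₂ → i₁ + j₁ ≤ N₁ →
      1 ≤ b → 1 ≤ b' → T ≤ b + b' + φ → g ∈ M b → h ∈ M b' →
      i₁ + i₂ + s ≤ b → j₁ + j₂ + s' ≤ b' →
      Bin M (b + b') (max (i₁ + i₂) (j₁ + j₂)) (s + s')
        (fun m n => ⁅g ^ (m.choose i₁ * n.choose i₂), h ^ (m.choose j₁ * n.choose j₂)⁆) := by
  intro N₂
  induction N₂ with
  | zero =>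
    refine ppow_inner hφ1 ihb4 hgint 0 ?_
    intro i₂ j₂ b b' g h s s' hN₂ hb hb' hfuel hg hh hs hs'
    exact ppow_const hcomm b b' g h s s' i₂ j₂ hb hb' hg hh hs hs' (by omega)
  | succ N₂ ihN₂ =>
    refine ppow_inner hφ1 ihb4 hgint (N₂ + 1) ?_
    intro i₂ j₂ b b' g h s s' hN₂ hb hb' hfuel hg hh hs hs'
    rcases Nat.eq_zero_or_pos (i₂ + j₂) with hz | hpos
    · exact ppow_const hcomm b b' g h s s' i₂ j₂ hb hb' hg hh hs hs' (by omega)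
    · have hsw := ihN₂ (i₂ + j₂) i₂ 0 j₂ 0 b b' g h s s' (by omega) (by omega)
        hb hb' hfuel hg hh (by omega) (by omega)
      refine (hsw.swap.congr fun m n => ?_).mono le_rfl (by omega) le_rfl
      rw [Nat.mul_comm (n.choose i₂), Nat.mul_comm (n.choose j₂)]

theorem b4_step (hanti : ∀ b : ℕ, M (b + 1) ≤ M b)
    (hcomm : ∀ a b : ℕ, 1 ≤ a → 1 ≤ b → ∀ g h : G,
      g ∈ M a → h ∈ M b → ⁅g, h⁆ ∈ M (a + b))
    (hT : M T = ⊥) {φ : ℕ}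
    (ihpkg : ∀ ψ, ψ < φ → GINTS M T ψ ∧ B4S M T ψ)
    (hgint : GINTS M T φ) : B4S M T φ := by
  intro a a' d d' s s' f f' ha ha' hφ hf hf'
  rcases Nat.eq_zero_or_pos φ with hφ0 | hφpos
  · refine Bin.triv fun m n => ?_
    have h1 : ⁅f m n, f' m n⁆ ∈ M (a + a') :=
      hcomm a a' ha ha' _ _ (hf.mem hanti m n) (hf'.mem hanti m n)
    exact hbot hanti hT (by omega) h1
  · have hψlt : φ - 1 < φ := by omega
    have ihb4 : B4S M T (φ - 1) := (ihpkg (φ - 1) hψlt).2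
    induction hf generalizing d' s' f' with
    | one => exact Bin.triv fun m n => by rw [commutatorElement_one_left]
    | @mul f₁ f₂ hf₁ hf₂ ih₁ ih₂ =>
      have hX : Bin M (a + a') (max d d') (s + s')
          (fun m n => ⁅f₂ m n, f' m n⁆) := ih₂ d' s' f' hf'
      have hJ : Bin M (a + a') (max d d') (s + s')
          (fun m n => ⁅(⁅f₂ m n, f' m n⁆)⁻¹, f₁ m n⁆) := by
        have := ihb4 (a + a') a (max d d') d (s + s') s _ _ (by omega) ha (by omega)
          hX.inv hf₁
        exact this.mono (by omega) (by omega) (by omega)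
      have hY : Bin M (a + a') (max d d') (s + s')
          (fun m n => ⁅f₁ m n, f' m n⁆) := ih₁ d' s' f' hf'
      exact ((hX.mul hJ).mul hY).congr fun m n => (idA (f₁ m n) (f₂ m n) (f' m n)).symm
    | @pow g b r₁ r₂ hg hab hd hs =>
      induction hf' with
      | one => exact Bin.triv fun m n => by rw [commutatorElement_one_right]
      | @mul f₁' f₂' hf₁' hf₂' ih₁' ih₂' =>
        have hZ : Bin M (a + a') (max d d') (s + s')
            (fun m n => ⁅g ^ (m.choose r₁ * n.choose r₂), f₂' m n⁆) := ih₂'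
        have hJ : Bin M (a + a') (max d d') (s + s')
            (fun m n => ⁅(⁅g ^ (m.choose r₁ * n.choose r₂), f₂' m n⁆)⁻¹, f₁' m n⁆) := by
          have := ihb4 (a + a') a' (max d d') d' (s + s') s' _ _ (by omega) ha' (by omega)
            hZ.inv hf₁'
          exact this.mono (by omega) (by omega) (by omega)
        exact (ih₁'.mul (hZ.mul hJ)).congr fun m n =>
          (idB (g ^ (m.choose r₁ * n.choose r₂)) (f₁' m n) (f₂' m n)).symm
      | @pow h b' r₁' r₂' hg' hab' hd' hs' =>
        have := ppow hcomm (by omega) ihb4 hgint (r₂ + r₂') (r₁ + r₁') r₁ r₂ r₁' r₂' b b'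
          g h s s' le_rfl le_rfl (by omega) (by omega) (by omega) hg hg' (by omega) (by omega)
        exact this.mono (by omega) (by omega) (by omega)

theorem bx1_step (hanti : ∀ b : ℕ, M (b + 1) ≤ M b)
    (hall : ∀ (a : ℕ) (g y : G), g ∈ M a → ⁅g, y⁆ ∈ M (a + 1))
    (hT : M T = ⊥) {φ : ℕ}
    (ihpkg : ∀ ψ, ψ < φ → GINTS M T ψ ∧ B4S M T ψ ∧ BX1S M T ψ)
    (hgint : GINTS M T φ) : BX1S M T φ := by
  intro b g y hb hφ hg
  rcases Nat.eq_zero_or_pos φ with hφ0 | hφpos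
  · refine Bin.triv fun m n => ?_
    exact hbot hanti hT (by omega) (hall b g (y ^ m) hg)
  · obtain ⟨ψ, rfl⟩ : ∃ ψ, φ = ψ + 1 := ⟨φ - 1, by omega⟩
    have hc₀ : ⁅g, y⁆ ∈ M (b + 1) := hall b g y hg
    have hβ : Bin M (b + 2) 1 (b + 1) (fun m n => ⁅⁅g, y⁆⁻¹, y ^ m⁆) :=
      (ihpkg ψ (by omega)).2.2 (b + 1) ⁅g, y⁆⁻¹ y (by omega) (by omega) (inv_mem hc₀)
    have hsuf : Bin M (b + 1) 0 (b + 1)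
        (fun m n => ⁅g, y⁆ * ⁅⁅g, y⁆⁻¹, y ^ m⁆) := by
      have hcst : Bin M (b + 1) 0 (b + 1) (fun m n : ℕ => ⁅g, y⁆) :=
        (Bin.pow ⁅g, y⁆ (b + 1) 0 0 hc₀ le_rfl le_rfl (by omega)).congr fun m n => by
          simp
      exact hcst.mul (hβ.mono (by omega) (by omega) (by omega))
    have hint : Bin M (b + 1) 1 b
        (rINT (fun m n => ⁅g, y⁆ * ⁅⁅g, y⁆⁻¹, y ^ m⁆)) :=
      rINT_bin hgint (by omega) (by omega) hsuf
    have h0 : ∀ n : ℕ, ⁅g, y ^ (0 : ℕ)⁆ = 1 := fun n => by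
      rw [pow_zero, commutatorElement_one_right]
    have hrec : ∀ m n : ℕ, ⁅g, y ^ (m + 1)⁆
        = ⁅g, y ^ m⁆ * (⁅g, y⁆ * ⁅⁅g, y⁆⁻¹, y ^ m⁆) := by
      intro m n
      rw [pow_succ]
      exact idB g (y ^ m) y
    have hFeq : ∀ m n : ℕ, ⁅g, y ^ m⁆
        = rINT (fun m n => ⁅g, y⁆ * ⁅⁅g, y⁆⁻¹, y ^ m⁆) m n :=
      rINT_ext (F := fun m n => ⁅g, y ^ m⁆) h0 hrec
    exact hint.congr fun m n => (hFeq m n).symm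

end PEngine

namespace PEngine

variable {G : Type*} [Group G] {M : ℕ → Subgroup G} {T : ℕ}

theorem master (hanti : ∀ b : ℕ, M (b + 1) ≤ M b)
    (hcomm : ∀ a b : ℕ, 1 ≤ a → 1 ≤ b → ∀ g h : G,
      g ∈ M a → h ∈ M b → ⁅g, h⁆ ∈ M (a + b))
    (hall : ∀ (a : ℕ) (g y : G), g ∈ M a → ⁅g, y⁆ ∈ M (a + 1))
    (hT : M T = ⊥) (φ : ℕ) : GINTS M T φ ∧ B4S M T φ ∧ BX1S M T φ := by
  induction φ using Nat.strong_induction_on with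
  | _ φ IH =>
    have hg : GINTS M T φ := gint_step hanti hT (fun ψ h => ⟨(IH ψ h).1, (IH ψ h).2.1⟩)
    have hb : B4S M T φ :=
      b4_step hanti hcomm hT (fun ψ h => ⟨(IH ψ h).1, (IH ψ h).2.1⟩) hg
    exact ⟨hg, hb, bx1_step hanti hall hT IH hg⟩

section Engine

variable (hanti : ∀ b : ℕ, M (b + 1) ≤ M b)
variable (hcomm : ∀ a b : ℕ, 1 ≤ a → 1 ≤ b → ∀ g h : G,
      g ∈ M a → h ∈ M b → ⁅g, h⁆ ∈ M (a + b))
variable (hall : ∀ (a : ℕ) (g y : G), g ∈ M a → ⁅g, y⁆ ∈ M (a + 1))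
variable (hT : M T = ⊥)

theorem engine_comm (hanti : ∀ b : ℕ, M (b + 1) ≤ M b)
    (hcomm : ∀ a b : ℕ, 1 ≤ a → 1 ≤ b → ∀ g h : G,
      g ∈ M a → h ∈ M b → ⁅g, h⁆ ∈ M (a + b))
    (hall : ∀ (a : ℕ) (g y : G), g ∈ M a → ⁅g, y⁆ ∈ M (a + 1))
    (hT : M T = ⊥) (x z : G) (hu : ⁅x, z⁆ ∈ M 1) :
    ∃ τ : ℕ → ℕ → G, Bin M 2 2 0 τ ∧ ∀ m : ℕ, ⁅x ^ m, z⁆ = ⁅x, z⁆ ^ m * τ m 0 := by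
  obtain ⟨hgint, hb4, hbx1⟩ := master hanti hcomm hall hT T
  set u : G := ⁅x, z⁆ with hudef
  have hβ : Bin M 2 1 1 (fun m n => ⁅u⁻¹, x ^ m⁆) := by
    have := hbx1 1 u⁻¹ x le_rfl (by omega) (inv_mem hu)
    exact this.mono le_rfl le_rfl le_rfl
  have hc : Bin M 1 1 0 (fun m n => u ^ m) := by
    refine (Bin.pow u 1 1 0 hu le_rfl le_rfl (by omega)).congr fun m n => ?_
    simp [Nat.choose_one_right]
  have hτ : Bin M 2 2 0 (lINT (conjP (fun m n => u ^ m) (fun m n => ⁅u⁻¹, x ^ m⁆))) :=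
    hgint 2 1 0 _ _ 1 1 0 (by omega) (by omega) hβ le_rfl hc
  refine ⟨_, hτ, ?_⟩
  intro m
  induction m with
  | zero => simp
  | succ m ih =>
    have hL : ⁅x ^ (m + 1), z⁆ = u * ⁅u⁻¹, x ^ m⁆ * ⁅x ^ m, z⁆ := by
      rw [pow_succ, idA]
    have key : ∀ t : G, u * ⁅u⁻¹, x ^ m⁆ * (u ^ m * t)
        = u ^ (m + 1) * ((u ^ m)⁻¹ * ⁅u⁻¹, x ^ m⁆ * u ^ m * t) := by
      intro t
      simp only [commutatorElement_def]
      group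
    rw [hL, ih, lINT_succ]
    simp only [conjP]
    rw [key]

theorem engine_mul (hanti : ∀ b : ℕ, M (b + 1) ≤ M b)
    (hcomm : ∀ a b : ℕ, 1 ≤ a → 1 ≤ b → ∀ g h : G,
      g ∈ M a → h ∈ M b → ⁅g, h⁆ ∈ M (a + b))
    (hall : ∀ (a : ℕ) (g y : G), g ∈ M a → ⁅g, y⁆ ∈ M (a + 1))
    (hT : M T = ⊥) (u v : G) (hu : u ∈ M 1) (hv : v ∈ M 1) :
    ∃ τ : ℕ → ℕ → G, Bin M 2 2 0 τ ∧ ∀ m : ℕ, (u * v) ^ m = u ^ m * v ^ m * τ m 0 := by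
  obtain ⟨hgint, hb4, hbx1⟩ := master hanti hcomm hall hT T
  have hv1 : Bin M 1 0 1 (fun _ _ : ℕ => v⁻¹) := by
    refine (Bin.pow v⁻¹ 1 0 0 (inv_mem hv) le_rfl le_rfl (by omega)).congr fun m n => ?_
    simp
  have hu1 : Bin M 1 1 0 (fun m _ : ℕ => (u⁻¹) ^ m) := by
    refine (Bin.pow u⁻¹ 1 1 0 (inv_mem hu) le_rfl le_rfl (by omega)).congr fun m n => ?_
    simp [Nat.choose_one_right]
  have hJ : Bin M 2 1 1 (fun m n => ⁅v⁻¹, (u⁻¹) ^ m⁆) := by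
    have := hb4 1 1 0 1 1 0 _ _ le_rfl le_rfl (by omega) hv1 hu1
    exact this.mono le_rfl (by omega) (by omega)
  have hc : Bin M 1 1 0 (fun m _ : ℕ => v ^ m) := by
    refine (Bin.pow v 1 1 0 hv le_rfl le_rfl (by omega)).congr fun m n => ?_
    simp [Nat.choose_one_right]
  have hτ : Bin M 2 2 0
      (lINT (conjP (fun m _ => v ^ m) (fun m n => ⁅v⁻¹, (u⁻¹) ^ m⁆))) :=
    hgint 2 1 0 _ _ 1 1 0 (by omega) (by omega) hJ le_rfl hc
  refine ⟨_, hτ, ?_⟩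
  intro m
  induction m with
  | zero => simp
  | succ m ih =>
    have hL : (u * v) ^ (m + 1) = (u * v) * (u * v) ^ m := pow_succ' (u * v) m
    have key : ∀ t : G, u * v * (u ^ m * v ^ m * t)
        = u ^ (m + 1) * v ^ (m + 1) * ((v ^ m)⁻¹ * ⁅v⁻¹, (u⁻¹) ^ m⁆ * v ^ m * t) := by
      intro t
      simp only [commutatorElement_def]
      group
    rw [hL, ih, lINT_succ]
    simp only [conjP]
    rw [key]

theorem engine_kill (hanti : ∀ b : ℕ, M (b + 1) ≤ M b) {f : ℕ → ℕ → G} {d : ℕ}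
    (hd : 1 ≤ d) (hf : Bin M 2 d 0 f) (n₀ : ℕ)
    (hkill : ∀ (bb r : ℕ) (g : G), g ∈ M bb → 2 ≤ bb → 1 ≤ r → r ≤ bb →
      g ^ (n₀.choose r) = 1) :
    f n₀ 0 = 1 := by
  induction hf with
  | one => rfl
  | pow g b r₁ r₂ hg hab hdd hs =>
    rcases Nat.eq_zero_or_pos r₂ with h2 | h2
    · subst h2
      have hr₁ : 1 ≤ r₁ := by omega
      have := hkill b r₁ g hg hab hr₁ (by omega)
      show g ^ (n₀.choose r₁ * (0 : ℕ).choose 0) = 1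
      simpa using this
    · show g ^ (n₀.choose r₁ * (0 : ℕ).choose r₂) = 1
      rw [Nat.choose_eq_zero_of_lt h2, Nat.mul_zero, pow_zero]
  | @mul f₁ f₂ h₁ h₂ ih₁ ih₂ =>
    show f₁ n₀ 0 * f₂ n₀ 0 = 1
    rw [ih₁, ih₂, one_mul]

end Engine

end PEngine

section Application

open PEngine Subgroup

variable {H : Type*} [Group H]

/-- `γ_{k+2} = 1` in `H` when `γ_{k+1}` is central. -/
theorem lcs_succ_eq_bot {k : ℕ} (hLk : (⊤ : Subgroup H).lowerCentralSeries k ≤ Subgroup.center H) :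
    (⊤ : Subgroup H).lowerCentralSeries (k + 1) = ⊥ := by
  have : (⊤ : Subgroup H).lowerCentralSeries (k + 1) = ⁅(⊤ : Subgroup H).lowerCentralSeries k, (⊤ : Subgroup H)⁆ := rfl
  rw [this, eq_bot_iff]
  rw [Subgroup.commutator_le]
  intro g hg y _
  rw [Subgroup.mem_bot, commutatorElement_eq_one_iff_mul_comm]
  exact (Subgroup.mem_center_iff.mp (hLk hg) y).symm

theorem keyH (p e k : ℕ) (hp : p.Prime) (he : 1 ≤ e) (hk : 1 ≤ k)
    (hcen : ∀ x : H, x ^ p ^ e ∈ Subgroup.center H)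
    (hLk : (⊤ : Subgroup H).lowerCentralSeries k ≤ Subgroup.center H) :
    ∀ t, t ≤ k - 1 → ∀ w ∈ (⊤ : Subgroup H).lowerCentralSeries (k - t),
      w ^ p ^ (e + Nat.log p k * t) = 1 := by
  have hbotk : (⊤ : Subgroup H).lowerCentralSeries (k + 1) = ⊥ := lcs_succ_eq_bot hLk
  intro t
  induction t using Nat.strong_induction_on with
  | _ t IH =>
    intro ht w hw
    set m : ℕ := Nat.log p k with hm
    set i : ℕ := k - t with hi
    have hi1 : 1 ≤ i := by omega
    have hik : i + t = k := by omega
    -- the engine data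
    set M : ℕ → Subgroup H := fun b => (⊤ : Subgroup H).lowerCentralSeries (i + b - 1) with hM
    set T : ℕ := k + 2 - i with hT
    have hanti : ∀ b : ℕ, M (b + 1) ≤ M b := by
      intro b
      exact Subgroup.lowerCentralSeries_antitone _ (by omega)
    have hcomm : ∀ a b : ℕ, 1 ≤ a → 1 ≤ b → ∀ g h : H,
        g ∈ M a → h ∈ M b → ⁅g, h⁆ ∈ M (a + b) := by
      intro a b ha hb g h hg hh
      have h1 : ⁅g, h⁆ ∈ ⁅(⊤ : Subgroup H).lowerCentralSeries (i + a - 1), (⊤ : Subgroup H).lowerCentralSeries (i + b - 1)⁆ :=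
        Subgroup.commutator_mem_commutator hg hh
      have h2 := lcs_comm_le (G := H) (i + a - 1) (i + b - 1)
      have h3 : (⊤ : Subgroup H).lowerCentralSeries ((i + a - 1) + (i + b - 1) + 1)
          ≤ (⊤ : Subgroup H).lowerCentralSeries (i + (a + b) - 1) := Subgroup.lowerCentralSeries_antitone _ (by omega)
      exact h3 (h2 h1)
    have hall : ∀ (a : ℕ) (g y : H), g ∈ M a → ⁅g, y⁆ ∈ M (a + 1) := by
      intro a g y hg
      have he2 : i + (a + 1) - 1 = (i + a - 1) + 1 := by omega
      show ⁅g, y⁆ ∈ (⊤ : Subgroup H).lowerCentralSeries (i + (a + 1) - 1)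
      rw [he2]
      exact Subgroup.commutator_mem_commutator hg (Subgroup.mem_top y)
    have hTbot : M T = ⊥ := by
      have h1 : i + T - 1 = k + 1 := by omega
      show (⊤ : Subgroup H).lowerCentralSeries (i + T - 1) = ⊥
      rw [h1, hbotk]
    -- the exponent
    set n₀ : ℕ := p ^ (e + m * t) with hn₀
    -- killing hypothesis
    have hkill : ∀ (bb r : ℕ) (g : H), g ∈ M bb → 2 ≤ bb → 1 ≤ r → r ≤ bb →
        g ^ (n₀.choose r) = 1 := by
      intro bb r g hg hbb hr hrbb
      rcases Nat.lt_or_ge k (i + bb - 1) with hdeep | hshallow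
      · -- g = 1
        have h1 : (⊤ : Subgroup H).lowerCentralSeries (i + bb - 1) ≤ (⊤ : Subgroup H).lowerCentralSeries (k + 1) :=
          Subgroup.lowerCentralSeries_antitone _ (by omega)
        have : g = 1 := by
          have := h1 hg
          rw [hbotk] at this
          exact Subgroup.mem_bot.mp this
        rw [this, one_pow]
      · set t' : ℕ := k - (i + bb - 1) with ht'
        have ht't : t' < t := by omega
        have hgord : g ^ p ^ (e + m * t') = 1 := by
          refine IH t' ht't (by omega) g ?_
          have : k - t' = i + bb - 1 := by omega
          rw [this]
          exact hg
        -- divisibility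
        have hdvd : p ^ (e + m * t') ∣ n₀.choose r := by
          have h1 : p ^ ((e + m * t) - Nat.log p r) ∣ n₀.choose r :=
            pow_sub_log_dvd_choose_pow hp (e + m * t) r hr
        -- log p r ≤ m * (bb - 1)
          have hlog : Nat.log p r ≤ m * (bb - 1) := by
            rcases Nat.eq_zero_or_pos m with hm0 | hmpos
            · -- k < p, so r < p and log = 0
              have hkp : k < p := by
                rcases Nat.log_eq_zero_iff.mp (hm ▸ hm0) with h | h
                · exact h
                · exact absurd hp.two_le (by omega)
              have hl0 : Nat.log p r = 0 := Nat.log_eq_zero_iff.mpr (Or.inl (by omega))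
              rw [hl0]
              exact Nat.zero_le _
            · have l1 : Nat.log p r ≤ Nat.log 2 r := Nat.log_anti_left (by norm_num) hp.two_le
              have l2 : Nat.log 2 r ≤ Nat.log 2 bb := Nat.log_mono_right hrbb
              have l3 : Nat.log 2 bb < bb := Nat.log_lt_self 2 (by omega)
              have : Nat.log p r ≤ bb - 1 := by omega
              calc Nat.log p r ≤ bb - 1 := this
                _ = 1 * (bb - 1) := (one_mul _).symm
                _ ≤ m * (bb - 1) := Nat.mul_le_mul_right _ hmpos
          refine dvd_trans (pow_dvd_pow p ?_) h1
          have : t' = t - (bb - 1) := by omega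
          -- e + m t' ≤ e + m t - log p r
          have h2 : m * t' + m * (bb - 1) ≤ m * t := by
            rw [← Nat.mul_add]
            exact Nat.mul_le_mul_left _ (by omega)
          omega
        obtain ⟨c, hc⟩ := hdvd
        rw [hc, pow_mul, hgord, one_pow]
    -- now the closure induction over L i
    obtain ⟨hgint, hb4, hbx1⟩ := master hanti hcomm hall hTbot T
    have hipred : i = (i - 1) + 1 := by omega
    have hLi : (⊤ : Subgroup H).lowerCentralSeries i = ⁅(⊤ : Subgroup H).lowerCentralSeries (i - 1), (⊤ : Subgroup H)⁆ := by
      rw [hipred]; rfl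
    have hwc : w ∈ ⁅(⊤ : Subgroup H).lowerCentralSeries (i - 1), (⊤ : Subgroup H)⁆ := by
      rw [← hLi]
      exact hw
    rw [Subgroup.commutator_def] at hwc
    have hM1 : M 1 = (⊤ : Subgroup H).lowerCentralSeries i := by
      show (⊤ : Subgroup H).lowerCentralSeries (i + 1 - 1) = _
      rw [Nat.add_sub_cancel]
    have hcentral : ∀ y : H, y ^ n₀ ∈ Subgroup.center H := by
      intro y
      have h1 : n₀ = p ^ e * p ^ (m * t) := by rw [hn₀, pow_add]
      rw [h1, pow_mul]
      exact pow_mem (hcen y) _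
    -- closure induction
    refine Subgroup.closure_induction ?_ ?_ ?_ ?_ hwc
    · -- generators
      rintro x ⟨z, hz, y, -, rfl⟩
      have huzy : ⁅z, y⁆ ∈ (⊤ : Subgroup H).lowerCentralSeries i := by
        rw [hLi]
        exact Subgroup.commutator_mem_commutator hz (Subgroup.mem_top y)
      have hu : ⁅y, z⁆ ∈ M 1 := by
        rw [hM1]
        have : ⁅y, z⁆ = ⁅z, y⁆⁻¹ := (commutatorElement_inv z y).symm
        rw [this]
        exact inv_mem huzy
      obtain ⟨τ, hτ, hid⟩ := engine_comm hanti hcomm hall hTbot y z hu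
      have hvanish : ⁅y ^ n₀, z⁆ = 1 := by
        rw [commutatorElement_eq_one_iff_mul_comm]
        exact (Subgroup.mem_center_iff.mp (hcentral y) z).symm
      have hτ1 : τ n₀ 0 = 1 := engine_kill hanti (by omega) hτ n₀ hkill
      have := hid n₀
      rw [hvanish, hτ1, mul_one] at this
      -- this : 1 = ⁅y, z⁆ ^ n₀
      have h2 : ⁅z, y⁆ = ⁅y, z⁆⁻¹ := (commutatorElement_inv y z).symm
      rw [h2, inv_pow, ← this, inv_one]
    · exact one_pow _
    · -- mul
      intro x y hx hy hxp hyp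
      have hxL : x ∈ M 1 := by rw [hM1, hLi]; exact hx
      have hyL : y ∈ M 1 := by rw [hM1, hLi]; exact hy
      obtain ⟨τ, hτ, hid⟩ := engine_mul hanti hcomm hall hTbot x y hxL hyL
      have hτ1 : τ n₀ 0 = 1 := engine_kill hanti (by omega) hτ n₀ hkill
      rw [hid n₀, hxp, hyp, hτ1, one_mul, one_mul]
    · intro x hx hxp
      rw [inv_pow, hxp, inv_one]

end Application


/-- Theorem 3.2 in the case `c = 1`: if `γ_{k+1}(F) ≤ R` and `x^(p^e) ∈ R` for
all `x ∈ F`, then every `g ∈ ⁅F, F⁆` satisfies `g^(p^(e + m(k-1))) ∈ ⁅R, F⁆`,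
where `m = ⌊log_p k⌋`. -/
theorem pow_mem_commutator_of_mem_commutatorSubgroup {F : Type*} [Group F]
    [IsFreeGroup F] (R : Subgroup F) [R.Normal] (p e k : ℕ) (hp : p.Prime)
    (he : 1 ≤ e) (hk : 1 ≤ k)
    (hnil : (⊤ : Subgroup F).lowerCentralSeries k ≤ R)
    (hexp : ∀ x : F, x ^ (p ^ e) ∈ R)
    (g : F) (hg : g ∈ commutator F) :
    g ^ (p ^ (e + Nat.log p k * (k - 1))) ∈ ⁅R, (⊤ : Subgroup F)⁆ := by
  set N : Subgroup F := ⁅R, (⊤ : Subgroup F)⁆ with hN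
  let π : F →* F ⧸ N := QuotientGroup.mk' N
  have hsur : Function.Surjective π := QuotientGroup.mk'_surjective N
  have hcenterR : ∀ r ∈ R, π r ∈ Subgroup.center (F ⧸ N) := by
    intro r hr
    rw [Subgroup.mem_center_iff]
    intro q
    induction q using QuotientGroup.induction_on with
    | H g' =>
      have h1 : ⁅r, g'⁆ ∈ N := Subgroup.commutator_mem_commutator hr (Subgroup.mem_top g')
      have h2 : π ⁅r, g'⁆ = 1 := (QuotientGroup.eq_one_iff _).mpr h1
      rw [map_commutatorElement] at h2
      have h3 := commutatorElement_eq_one_iff_mul_comm.mp h2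
      exact h3.symm
  have hcen : ∀ x : F ⧸ N, x ^ p ^ e ∈ Subgroup.center (F ⧸ N) := by
    intro x
    induction x using QuotientGroup.induction_on with
    | H x' =>
      have : (π x') ^ p ^ e = π (x' ^ p ^ e) := (map_pow π x' _).symm
      exact this ▸ hcenterR _ (hexp x')
  have hmaptop : Subgroup.map π ⊤ = ⊤ := Subgroup.map_top_of_surjective π hsur
  have hLmap : ∀ j, (⊤ : Subgroup (F ⧸ N)).lowerCentralSeries j ≤ ((⊤ : Subgroup F).lowerCentralSeries j).map π := by
    intro j
    induction j with
    | zero =>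
      exact le_of_eq hmaptop.symm
    | succ j ih =>
      show ⁅(⊤ : Subgroup (F ⧸ N)).lowerCentralSeries j, ⊤⁆ ≤ _
      calc ⁅(⊤ : Subgroup (F ⧸ N)).lowerCentralSeries j, (⊤ : Subgroup (F ⧸ N))⁆
          ≤ ⁅((⊤ : Subgroup F).lowerCentralSeries j).map π, Subgroup.map π ⊤⁆ :=
            Subgroup.commutator_mono ih (le_of_eq hmaptop.symm)
        _ = (⁅(⊤ : Subgroup F).lowerCentralSeries j, (⊤ : Subgroup F)⁆).map π :=
            (Subgroup.map_commutator (H₁ := (⊤ : Subgroup F).lowerCentralSeries j) (H₂ := ⊤) π).symm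
        _ = ((⊤ : Subgroup F).lowerCentralSeries (j + 1)).map π := rfl
  have hRmap : R.map π ≤ Subgroup.center (F ⧸ N) := by
    intro x hx
    obtain ⟨r, hr, rfl⟩ := hx
    exact hcenterR r hr
  have hLk : (⊤ : Subgroup (F ⧸ N)).lowerCentralSeries k ≤ Subgroup.center (F ⧸ N) :=
    le_trans (hLmap k) (le_trans (Subgroup.map_mono hnil) hRmap)
  have hgH : π g ∈ (⊤ : Subgroup (F ⧸ N)).lowerCentralSeries (k - (k - 1)) := by
    have hk1 : k - (k - 1) = 1 := by omega
    rw [hk1, Subgroup.top_lowerCentralSeries_one]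
    have h1 : π g ∈ (commutator F).map π := Subgroup.mem_map_of_mem π hg
    have h2 : (commutator F).map π ≤ commutator (F ⧸ N) := by
      rw [_root_.commutator_def, Subgroup.map_commutator, hmaptop, ← _root_.commutator_def]
    exact h2 h1
  have hfin := keyH p e k hp he hk hcen hLk (k - 1) le_rfl (π g) hgH
  rw [← map_pow] at hfin
  exact (QuotientGroup.eq_one_iff _).mp hfin
end

section
/- Let p be a prime, e ≥ 1, c ≥ 1 integers, and let G be a p-group of nilpotency class at most p−1 and exponent dividing p^e, presented as G = F/R with F a free group and R a normal subgroup; equivalently, γ_p(F) ≤ R and x^(p^e) ∈ R for every x ∈ F. Then for every g ∈ R ∩ γ_{c+1}(F), one has g^(p^e) ∈ [R, cF]; that is, the exponent of the c-nilpotent multiplier M^(c)(G) = (R ∩ γ_{c+1}(F))/[R, cF] divides exp(G). -/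
set_option linter.unusedSectionVars false
set_option linter.unusedVariables false

open scoped commutatorElement

namespace HPc

abbrev lowerCentralSeries (G : Type*) [Group G] (n : ℕ) : Subgroup G :=
  (⊤ : Subgroup G).lowerCentralSeries n

theorem lowerCentralSeries_zero {G : Type*} [Group G] : lowerCentralSeries G 0 = ⊤ := rfl

theorem lowerCentralSeries_antitone {G : Type*} [Group G] : Antitone (lowerCentralSeries G) :=
  (⊤ : Subgroup G).lowerCentralSeries_antitone

instance lowerCentralSeries_normal {G : Type*} [Group G] (n : ℕ) :
    (lowerCentralSeries G n).Normal := by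
  unfold lowerCentralSeries; infer_instance

end HPc

namespace HPc

variable {G : Type*} [Group G]

/-- forward finite difference of a group-valued sequence -/
def dlt (f : ℕ → G) : ℕ → G := fun n => (f n)⁻¹ * f (n + 1)

inductive PTree (G : Type*) where
  | binom : G → ℕ → ℕ → PTree G
  | inv : PTree G → PTree G
  | mul : PTree G → PTree G → PTree G
  | comm : PTree G → PTree G → PTree G

namespace PTree

/-- conjugation `v⁻¹ u v` as a derived tree -/
def conjT (u v : PTree G) : PTree G := .mul (.comm (.inv v) u) u

def eval : PTree G → ℕ → G
  | binom c k _, n => c ^ (n.choose k)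
  | inv t, n => (eval t n)⁻¹
  | mul f g, n => eval f n * eval g n
  | comm f g, n => ⁅eval f n, eval g n⁆

def lvl : PTree G → ℕ
  | binom _ _ m => m
  | inv t => lvl t
  | mul f g => min (lvl f) (lvl g)
  | comm f g => lvl f + lvl g

def Valid (F : ℕ → Subgroup G) : PTree G → Prop
  | binom c k m => c ∈ F (m + k)
  | inv t => Valid F t
  | mul f g => Valid F f ∧ Valid F g
  | comm f g => Valid F f ∧ Valid F g

/-- formal derivative: a tree evaluating to `dlt (eval t)` -/
def D : PTree G → PTree G
  | binom c k m => binom (if k = 0 then 1 else c) (k - 1) (m + 1)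
  | inv t => .mul (.comm t (.inv (D t))) (.inv (D t))
  | mul f g => .mul (conjT (D f) g) (D g)
  | comm f g =>
      .mul (conjT (conjT (.comm (D f) (.mul g (D g))) (.inv f)) (.comm f g))
        (conjT (.comm f (D g)) (.inv g))

@[simp] lemma eval_conjT (u v : PTree G) (n : ℕ) :
    eval (conjT u v) n = (eval v n)⁻¹ * eval u n * eval v n := by
  simp only [conjT, eval, commutatorElement_def]
  group

@[simp] lemma lvl_conjT (u v : PTree G) : lvl (conjT u v) = lvl u := by
  simp only [conjT, lvl]
  omega

lemma valid_conjT {F : ℕ → Subgroup G} {u v : PTree G} (hu : Valid F u) (hv : Valid F v) :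
    Valid F (conjT u v) := ⟨⟨hv, hu⟩, hu⟩

lemma eval_D (t : PTree G) (n : ℕ) : eval (D t) n = dlt (eval t) n := by
  induction t generalizing n with
  | binom c k m =>
    rcases k with _ | k
    · simp [D, eval, dlt]
    · simp only [D, eval, dlt, if_neg (Nat.succ_ne_zero k), Nat.add_sub_cancel]
      rw [Nat.choose_succ_succ, pow_add, pow_mul_comm, inv_mul_cancel_left]
  | inv t ih =>
    simp only [D, eval, dlt, commutatorElement_def, ih]
    group
  | mul f g ihf ihg =>
    simp only [D, eval, eval_conjT, dlt, ihf, ihg]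
    group
  | comm f g ihf ihg =>
    simp only [D, eval, eval_conjT, dlt, ihf, ihg, commutatorElement_def]
    group

lemma lvl_D (t : PTree G) : lvl t + 1 ≤ lvl (D t) := by
  induction t with
  | binom c k m => simp [D, lvl]
  | inv t ih => simp only [D, lvl] at *; omega
  | mul f g ihf ihg => simp only [D, lvl, lvl_conjT] at *; omega
  | comm f g ihf ihg => simp only [D, lvl, lvl_conjT] at *; omega

lemma valid_D {F : ℕ → Subgroup G} {t : PTree G} (h : Valid F t) : Valid F (D t) := by
  induction t with
  | binom c k m =>
    rcases k with _ | k
    · simp only [D, Valid]; exact one_mem _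
    · simp only [D, Valid, if_neg (Nat.succ_ne_zero k), Nat.add_sub_cancel] at *
      have : m + 1 + k = m + (k + 1) := by omega
      rw [this]; exact h
  | inv t ih => exact ⟨⟨h, ih h⟩, ih h⟩
  | mul f g ihf ihg => exact ⟨valid_conjT (ihf h.1) h.2, ihg h.2⟩
  | comm f g ihf ihg =>
    exact ⟨valid_conjT (valid_conjT ⟨ihf h.1, h.2, ihg h.2⟩ h.1) h,
      valid_conjT ⟨h.1, ihg h.2⟩ h.2⟩

section Mem

variable (F : ℕ → Subgroup G)
variable (hanti : ∀ i j : ℕ, i ≤ j → F j ≤ F i)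
variable (hsc : ∀ (i j : ℕ) (x y : G), x ∈ F i → y ∈ F j → ⁅x, y⁆ ∈ F (i + j))

include hanti hsc in
lemma eval_mem {t : PTree G} (ht : Valid F t) (n : ℕ) : eval t n ∈ F (lvl t) := by
  induction t with
  | binom c k m => exact pow_mem (hanti m (m + k) (Nat.le_add_right _ _) ht) _
  | inv t ih => exact inv_mem (ih ht)
  | mul f g ihf ihg =>
    exact mul_mem (hanti _ _ (min_le_left _ _) (ihf ht.1)) (hanti _ _ (min_le_right _ _) (ihg ht.2))
  | comm f g ihf ihg => exact hsc _ _ _ _ (ihf ht.1) (ihg ht.2)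

include hanti hsc in
lemma main_mem : ∀ (k : ℕ) (t : PTree G), Valid F t → ∀ n : ℕ, dlt^[k] (eval t) n ∈ F (lvl t + k) := by
  intro k
  induction k with
  | zero => intro t ht n; simpa using eval_mem F hanti hsc ht n
  | succ k ih =>
    intro t ht n
    rw [Function.iterate_succ_apply]
    have h1 : dlt (eval t) = eval (D t) := funext fun m => (eval_D t m).symm
    rw [h1]
    exact hanti _ _ (by have := lvl_D t; omega) (ih (D t) (valid_D ht) n)

end Mem

end PTree

end HPc

namespace HPc

variable {G : Type*} [Group G]

lemma vanish_front : ∀ (j : ℕ) (f : ℕ → G), (∀ n, n < j → f n = 1) → dlt^[j] f 0 = f j := by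
  intro j
  induction j with
  | zero => intro f _; rfl
  | succ j ih =>
    intro f hf
    rw [Function.iterate_succ_apply]
    have h1 : ∀ n, n < j → dlt f n = 1 := by
      intro n hn
      simp only [dlt, hf n (by omega), hf (n + 1) (by omega), one_mul, inv_one]
    rw [ih (dlt f) h1]
    simp only [dlt, hf j (by omega), inv_one, one_mul]

lemma vanish_back : ∀ (T : ℕ) (f : ℕ → G) (m : ℕ), dlt^[T] f m = 1 →
    (∀ i, i < T → f (m + i) = 1) → f (m + T) = 1 := by
  intro T
  induction T with
  | zero => intro f m h _; exact h
  | succ T ih =>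
    intro f m h hf
    rw [Function.iterate_succ_apply] at h
    have h1 : ∀ i, i < T → dlt f (m + i) = 1 := by
      intro i hi
      simp only [dlt, hf i (by omega), show m + i + 1 = m + (i + 1) by omega,
        hf (i + 1) (by omega), one_mul, inv_one]
    have h2 := ih (dlt f) m h h1
    have h3 : f (m + T) = 1 := hf T (by omega)
    simp only [dlt, h3, inv_one, one_mul, show m + T + 1 = m + (T + 1) by omega] at h2
    exact h2

namespace PTree

variable (F : ℕ → Subgroup G)
variable (hanti : ∀ i j : ℕ, i ≤ j → F j ≤ F i)
variable (hsc : ∀ (i j : ℕ) (x y : G), x ∈ F i → y ∈ F j → ⁅x, y⁆ ∈ F (i + j))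

include hanti hsc in
theorem taylor (t : PTree G) (ht : Valid F t) (T : ℕ) (hT : F (lvl t + T) = ⊥) :
    ∃ c : ℕ → G, (∀ k, c k ∈ F (lvl t + k)) ∧
      ∀ n, eval t n = ((List.range T).map (fun k => c k ^ n.choose k)).prod := by
  have peel : ∀ j : ℕ, ∃ (c : ℕ → G) (w : PTree G), Valid F w ∧ lvl w = lvl t ∧
      (∀ k, c k ∈ F (lvl t + k)) ∧
      (∀ n, eval t n = ((List.range j).map fun k => c k ^ n.choose k).prod * eval w n) ∧
      (∀ n, n < j → eval w n = 1) := by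
    intro j
    induction j with
    | zero =>
      exact ⟨fun _ => 1, t, ht, rfl, fun k => one_mem _, fun n => by simp, fun n h => by omega⟩
    | succ j ih =>
      obtain ⟨c, w, hw, hlw, hc, hprod, hvan⟩ := ih
      set d : G := dlt^[j] (eval w) 0 with hd
      have hdmem : d ∈ F (lvl t + j) := by
        rw [← hlw]; exact main_mem F hanti hsc j w hw 0
      have hdval : d = eval w j := vanish_front j (eval w) hvan
      refine ⟨Function.update c j d, .mul (.binom d⁻¹ j (lvl t)) w, ⟨inv_mem hdmem, hw⟩,
        by simp [lvl, hlw], ?_, ?_, ?_⟩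
      · intro k
        rcases eq_or_ne k j with rfl | hk
        · simpa using hdmem
        · simpa [Function.update_of_ne hk] using hc k
      · intro n
        rw [List.range_succ, List.map_append, List.prod_append]
        have hcong : ((List.range j).map fun k => Function.update c j d k ^ n.choose k)
            = (List.range j).map fun k => c k ^ n.choose k := by
          apply List.map_congr_left
          intro k hk
          rw [Function.update_of_ne (by simp at hk; omega)]
        rw [hcong]
        simp only [List.map_cons, List.map_nil, List.prod_cons, eval,
          Function.update_self, List.prod_nil, mul_one]
        rw [hprod n, mul_assoc]
        congr 1
        rw [inv_pow, ← mul_assoc, mul_inv_cancel, one_mul]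
      · intro n hn
        rcases eq_or_ne n j with rfl | hne
        · simp only [eval, Nat.choose_self, pow_one, hdval, inv_mul_cancel]
        · have hnj : n < j := by omega
          simp only [eval, Nat.choose_eq_zero_of_lt hnj, pow_zero, one_mul, hvan n hnj]
  obtain ⟨c, w, hw, hlw, hc, hprod, hvan⟩ := peel T
  have hwall : ∀ n, eval w n = 1 := by
    intro n
    induction n using Nat.strong_induction_on with
    | _ n ihn =>
      rcases lt_or_ge n T with h | h
      · exact hvan n h
      · have h0 : dlt^[T] (eval w) (n - T) = 1 := by
          have := main_mem F hanti hsc T w hw (n - T)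
          rw [hlw, hT] at this
          simpa using this
        have h1 : ∀ i, i < T → eval w (n - T + i) = 1 := fun i hi => ihn _ (by omega)
        have := vanish_back T (eval w) (n - T) h0 h1
        rwa [show n - T + T = n by omega] at this
  refine ⟨c, hc, fun n => ?_⟩
  rw [hprod n, hwall n, mul_one]

end PTree
end HPc

namespace HPc

variable {G : Type*} [Group G]

lemma three_le {A B C N : Subgroup G} [N.Normal] (h1 : ⁅⁅B, C⁆, A⁆ ≤ N) (h2 : ⁅⁅C, A⁆, B⁆ ≤ N) :
    ⁅⁅A, B⁆, C⁆ ≤ N := by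
  set π := QuotientGroup.mk' N with hπ
  have hker : π.ker = N := QuotientGroup.ker_mk' N
  have hbot : ∀ {X : Subgroup G}, X ≤ N → X.map π = ⊥ := by
    intro X hX
    rw [Subgroup.map_eq_bot_iff, hker]; exact hX
  have key := Subgroup.commutator_commutator_eq_bot_of_rotate
    (H₁ := A.map π) (H₂ := B.map π) (H₃ := C.map π) ?_ ?_
  · rw [← Subgroup.map_commutator, ← Subgroup.map_commutator, Subgroup.map_eq_bot_iff, hker] at key
    exact key
  · rw [← Subgroup.map_commutator, ← Subgroup.map_commutator]
    exact hbot h1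
  · rw [← Subgroup.map_commutator, ← Subgroup.map_commutator]
    exact hbot h2

lemma lcs_succ_comm {G : Type*} [Group G] (n : ℕ) :
    lowerCentralSeries G (n + 1) = ⁅lowerCentralSeries G n, (⊤ : Subgroup G)⁆ := rfl

lemma lcs_comm_le :
    ∀ n m : ℕ, ⁅lowerCentralSeries G m, lowerCentralSeries G n⁆ ≤ lowerCentralSeries G (m + n + 1) := by
  intro n
  induction n with
  | zero =>
    intro m
    rw [lowerCentralSeries_zero]
    exact le_of_eq (lcs_succ_comm m).symm
  | succ n ih =>
    intro m
    rw [lcs_succ_comm n, Subgroup.commutator_comm]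
    apply three_le
    · calc ⁅⁅(⊤ : Subgroup G), lowerCentralSeries G m⁆, lowerCentralSeries G n⁆
          = ⁅⁅lowerCentralSeries G m, (⊤ : Subgroup G)⁆, lowerCentralSeries G n⁆ := by
            rw [Subgroup.commutator_comm (⊤ : Subgroup G)]
        _ = ⁅lowerCentralSeries G (m + 1), lowerCentralSeries G n⁆ := by
            rw [← lcs_succ_comm]
        _ ≤ lowerCentralSeries G (m + 1 + n + 1) := ih (m + 1)
        _ ≤ lowerCentralSeries G (m + (n + 1) + 1) := le_of_eq (by ring_nf)
    · calc ⁅⁅lowerCentralSeries G m, lowerCentralSeries G n⁆, (⊤ : Subgroup G)⁆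
          ≤ ⁅lowerCentralSeries G (m + n + 1), (⊤ : Subgroup G)⁆ :=
            Subgroup.commutator_mono (ih m) le_rfl
        _ = lowerCentralSeries G (m + n + 2) := (lcs_succ_comm (m + n + 1)).symm
        _ ≤ lowerCentralSeries G (m + (n + 1) + 1) := le_of_eq (by ring_nf)

end HPc

namespace HPc

variable {K : Type*} [Group K] (N : Subgroup K) [hN : N.Normal]

lemma itC_succ (i : ℕ) : iteratedCommutator N (i + 1) = ⁅iteratedCommutator N i, (⊤ : Subgroup K)⁆ :=
  rfl

lemma itC_normal : ∀ i, (iteratedCommutator N i).Normal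
  | 0 => hN
  | i + 1 => by
      haveI := itC_normal i
      exact Subgroup.commutator_normal (iteratedCommutator N i) ⊤

lemma itC_D : ∀ i j : ℕ, ⁅iteratedCommutator N j, lowerCentralSeries K i⁆ ≤
    iteratedCommutator N (i + j + 1) := by
  intro i
  induction i with
  | zero =>
    intro j
    rw [lowerCentralSeries_zero, show (0 : ℕ) + j + 1 = j + 1 by omega, itC_succ]
  | succ i ih =>
    intro j
    haveI : (iteratedCommutator N (i + 1 + j + 1)).Normal := itC_normal N _
    rw [lcs_succ_comm i, Subgroup.commutator_comm]
    refine three_le ?_ ?_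
    · have h1 : ⁅(⊤ : Subgroup K), iteratedCommutator N j⁆ = iteratedCommutator N (j + 1) := by
        rw [Subgroup.commutator_comm, itC_succ]
      rw [h1]
      have := ih (j + 1)
      rwa [show i + (j + 1) + 1 = i + 1 + j + 1 by omega] at this
    · have h2 : ⁅iteratedCommutator N j, lowerCentralSeries K i⁆ ≤
          iteratedCommutator N (i + j + 1) := ih j
      calc ⁅⁅iteratedCommutator N j, lowerCentralSeries K i⁆, (⊤ : Subgroup K)⁆
          ≤ ⁅iteratedCommutator N (i + j + 1), (⊤ : Subgroup K)⁆ :=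
            Subgroup.commutator_mono h2 le_rfl
        _ = iteratedCommutator N (i + 1 + j + 1) := by
            rw [← itC_succ, show i + j + 1 + 1 = i + 1 + j + 1 by omega]

lemma itC_C : ∀ i : ℕ, ⁅lowerCentralSeries K i, N⁆ ≤ iteratedCommutator N (i + 1) := by
  intro i
  induction i with
  | zero =>
    rw [lowerCentralSeries_zero, Subgroup.commutator_comm, itC_succ]
    exact le_of_eq rfl
  | succ i ih =>
    haveI : (iteratedCommutator N (i + 1 + 1)).Normal := itC_normal N _
    rw [lcs_succ_comm i]
    refine three_le ?_ ?_
    · have h1 : ⁅(⊤ : Subgroup K), N⁆ = iteratedCommutator N 1 := by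
        rw [Subgroup.commutator_comm, itC_succ]
        show ⁅N, (⊤ : Subgroup K)⁆ = ⁅iteratedCommutator N 0, ⊤⁆
        rfl
      rw [h1]
      have := itC_D N i 1
      rwa [show i + 1 + 1 = i + 1 + 1 by omega] at this
    · calc ⁅⁅N, lowerCentralSeries K i⁆, (⊤ : Subgroup K)⁆
          ≤ ⁅iteratedCommutator N (i + 1), (⊤ : Subgroup K)⁆ := by
            refine Subgroup.commutator_mono ?_ le_rfl
            rw [Subgroup.commutator_comm]; exact ih
        _ = iteratedCommutator N (i + 1 + 1) := (itC_succ N _).symm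

lemma lcs_le_itC {a : ℕ} (h : lowerCentralSeries K a ≤ N) :
    ∀ i, lowerCentralSeries K (a + i) ≤ iteratedCommutator N i := by
  intro i
  induction i with
  | zero => exact h
  | succ i ih =>
    calc lowerCentralSeries K (a + (i + 1)) = ⁅lowerCentralSeries K (a + i), (⊤ : Subgroup K)⁆ := by
          rw [show a + (i + 1) = (a + i) + 1 by omega, lcs_succ_comm]
      _ ≤ ⁅iteratedCommutator N i, (⊤ : Subgroup K)⁆ := Subgroup.commutator_mono ih le_rfl
      _ = iteratedCommutator N (i + 1) := (itC_succ N _).symm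

end HPc

namespace HPc

lemma pe_dvd_choose {p e k : ℕ} (hp : p.Prime) (h1 : 1 ≤ k) (hk : k < p) :
    p ^ e ∣ (p ^ e).choose k := by
  have hpe : 1 ≤ p ^ e := Nat.one_le_pow _ _ hp.pos
  obtain ⟨m, hm⟩ : ∃ m, p ^ e = m + 1 := ⟨p ^ e - 1, by omega⟩
  obtain ⟨l, hl⟩ : ∃ l, k = l + 1 := ⟨k - 1, by omega⟩
  have key : (m + 1) * m.choose l = (m + 1).choose (l + 1) * (l + 1) := by
    rw [← Nat.add_one_mul_choose_eq]
  have hdvd : p ^ e ∣ (p ^ e).choose k * k := by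
    rw [hm, hl, ← key]
    exact ⟨m.choose l, rfl⟩
  have hcop : Nat.Coprime (p ^ e) k := by
    refine Nat.Coprime.pow_left _ ?_
    exact (Nat.Prime.coprime_iff_not_dvd hp).mpr
      (fun h => by have := Nat.le_of_dvd (by omega) h; omega)
  exact hcop.dvd_of_dvd_mul_right hdvd

end HPc

namespace HPc

lemma prod_split2 {G : Type*} [Group G] (f : ℕ → G) (t : ℕ) :
    ((List.range (t + 2)).map f).prod =
      f 0 * f 1 * ((List.range t).map (fun k => f (k + 2))).prod := by
  rw [show t + 2 = 2 + t by omega, List.range_add]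
  rw [List.map_append, List.prod_append, List.map_map]
  have h2 : ((List.range 2).map f).prod = f 0 * f 1 := by
    simp [List.range_succ]
  rw [h2]
  congr 1
  apply congrArg
  apply List.map_congr_left
  intro k _
  simp [Function.comp, Nat.add_comm]

variable {K : Type*} [Group K]

/-- subgroup generated by `q`-th powers of `lowerCentralSeries K j` -/
def Om (q j : ℕ) : Subgroup K := Subgroup.closure ((fun x : K => x ^ q) '' (lowerCentralSeries K j))

lemma mem_Om {q j : ℕ} {x : K} (hx : x ∈ lowerCentralSeries K j) : x ^ q ∈ Om q j :=
  Subgroup.subset_closure ⟨x, hx, rfl⟩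

lemma sc_phi (φ : ℕ → ℕ) (hφ0 : φ 0 = 0)
    (hφadd : ∀ i j, 1 ≤ i → 1 ≤ j → φ (i + j) ≤ φ i + φ j + 1) (hmono : Monotone φ)
    (i j : ℕ) (x y : K) (hx : x ∈ lowerCentralSeries K (φ i))
    (hy : y ∈ lowerCentralSeries K (φ j)) : ⁅x, y⁆ ∈ lowerCentralSeries K (φ (i + j)) := by
  rcases Nat.eq_zero_or_pos i with rfl | hi
  · have he : ⁅x, y⁆ = (x * y * x⁻¹) * y⁻¹ := by group
    rw [Nat.zero_add, he]
    exact mul_mem ((lowerCentralSeries_normal (φ j)).conj_mem y hy x) (inv_mem hy)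
  rcases Nat.eq_zero_or_pos j with rfl | hj
  · have he : ⁅x, y⁆ = x * (y * x⁻¹ * y⁻¹) := by group
    rw [Nat.add_zero, he]
    exact mul_mem hx ((lowerCentralSeries_normal (φ i)).conj_mem x⁻¹ (inv_mem hx) y)
  · have h1 : ⁅x, y⁆ ∈ ⁅lowerCentralSeries K (φ i), lowerCentralSeries K (φ j)⁆ :=
      Subgroup.commutator_mem_commutator hx hy
    exact lowerCentralSeries_antitone (hφadd i j hi hj) (lcs_comm_le (φ j) (φ i) h1)

section Engine

variable (q p e c : ℕ) (hp : p.Prime) (he : 1 ≤ e) (hq : q = p ^ e) (hc : 1 ≤ c)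
variable (htr : lowerCentralSeries K (p + c - 1) = ⊥)
variable (hcm : ∀ u ∈ lowerCentralSeries K (c - 1), ∀ x : K, ⁅u, x ^ q⁆ = 1)

include hp he hq hc htr in
/-- generator case: `⁅u, x⁆ ^ q ∈ Ω_{ℓ+1}` for `u` of weight `ℓ`. -/
lemma need2 (hcm' : ∀ u ∈ lowerCentralSeries K (c - 1), ∀ x : K, ⁅u, x ^ q⁆ = 1)
    (ℓ : ℕ) (hℓ : c ≤ ℓ) (u : K) (hu : u ∈ lowerCentralSeries K (ℓ - 1)) (x : K) :
    ⁅u, x⁆ ^ q ∈ Om q (ℓ + 1) := by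
  classical
  set M := p + c - 1 with hM
  set F : ℕ → Subgroup K := fun m => lowerCentralSeries K (m - 1) with hF
  have hanti : ∀ i j : ℕ, i ≤ j → F j ≤ F i := fun i j hij =>
    lowerCentralSeries_antitone (by omega)
  have hsc : ∀ (i j : ℕ) (x y : K), x ∈ F i → y ∈ F j → ⁅x, y⁆ ∈ F (i + j) := by
    intro i j x y hx hy
    exact sc_phi (fun m => m - 1) rfl
      (fun i j hi hj => by show i + j - 1 ≤ (i - 1) + (j - 1) + 1; omega)
      (fun a b hab => by show a - 1 ≤ b - 1; omega) i j x y hx hy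
  set t : PTree K := .comm (.binom u 0 ℓ) (.binom x 1 0) with ht
  have hvalid : PTree.Valid F t := by
    constructor
    · show u ∈ F (ℓ + 0)
      simpa [hF] using hu
    · show x ∈ F (0 + 1)
      simp [hF, lowerCentralSeries_zero]
  have hlvl : PTree.lvl t = ℓ := by simp [ht, PTree.lvl]
  have hT : F (PTree.lvl t + (M + 1)) = ⊥ := by
    rw [hlvl, eq_bot_iff, ← htr]
    exact lowerCentralSeries_antitone (by omega)
  obtain ⟨cf, hcf, heq⟩ := PTree.taylor F hanti hsc t hvalid (M + 1) hT
  have heval : ∀ n, PTree.eval t n = ⁅u, x ^ n⁆ := by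
    intro n
    simp [ht, PTree.eval, Nat.choose_one_right]
  obtain ⟨s, hs⟩ : ∃ s, M + 1 = s + 2 := ⟨M - 1, by
    have := hp.two_le; omega⟩
  have hsplit : ∀ n, ⁅u, x ^ n⁆ =
      cf 0 ^ n.choose 0 * cf 1 ^ n.choose 1 *
        ((List.range s).map (fun k => cf (k + 2) ^ n.choose (k + 2))).prod := by
    intro n
    rw [← heval n, heq n, hs, prod_split2]
  have htail0 : ∀ n : ℕ, n ≤ 1 →
      ((List.range s).map (fun k => cf (k + 2) ^ n.choose (k + 2))).prod = 1 := by
    intro n hn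
    apply List.prod_eq_one
    intro y hy
    simp only [List.mem_map, List.mem_range] at hy
    obtain ⟨k, _, rfl⟩ := hy
    rw [Nat.choose_eq_zero_of_lt (by omega), pow_zero]
  have hc0 : cf 0 = 1 := by
    have h0 := hsplit 0
    rw [htail0 0 (by omega)] at h0
    simp only [pow_zero, commutatorElement_one_right, Nat.choose_zero_right, pow_one,
      Nat.choose_one_right, mul_one] at h0
    exact h0.symm
  have hc1 : cf 1 = ⁅u, x⁆ := by
    have h1 := hsplit 1
    rw [htail0 1 (by omega)] at h1
    simp only [pow_one, Nat.choose_zero_right, Nat.choose_one_right, hc0, one_pow, one_mul,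
      mul_one] at h1
    exact h1.symm
  have hq1 := hsplit q
  rw [hcm' u (lowerCentralSeries_antitone (by omega) hu) x] at hq1
  rw [hc0, hc1, one_pow, one_mul, Nat.choose_one_right] at hq1
  have : ⁅u, x⁆ ^ q =
      (((List.range s).map (fun k => cf (k + 2) ^ q.choose (k + 2))).prod)⁻¹ := by
    rw [eq_inv_iff_mul_eq_one]
    exact hq1.symm
  rw [this]
  refine inv_mem ?_
  refine Subgroup.list_prod_mem _ ?_
  intro y hy
  simp only [List.mem_map, List.mem_range] at hy
  obtain ⟨k, _, rfl⟩ := hy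
  have hcfk : cf (k + 2) ∈ lowerCentralSeries K (ℓ + k + 1) := by
    have := hcf (k + 2)
    rw [hlvl] at this
    simpa [hF, show ℓ + (k + 2) - 1 = ℓ + k + 1 by omega] using this
  rcases lt_or_ge (k + 2) p with hkp | hkp
  · obtain ⟨m, hm⟩ : q ∣ q.choose (k + 2) := by
      rw [hq]; exact pe_dvd_choose hp (by omega) hkp
    rw [hm, mul_comm, pow_mul]
    refine mem_Om (pow_mem ?_ m)
    exact lowerCentralSeries_antitone (by omega) hcfk
  · have : cf (k + 2) ∈ lowerCentralSeries K (p + c - 1) := by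
      refine lowerCentralSeries_antitone (by omega) hcfk
    rw [htr] at this
    simp only [Subgroup.mem_bot] at this
    rw [this, one_pow]
    exact one_mem _

end Engine
end HPc

namespace HPc
section Engine2
variable {K : Type*} [Group K]
variable (q p e c : ℕ) (hp : p.Prime) (he : 1 ≤ e) (hq : q = p ^ e) (hc : 1 ≤ c)
variable (htr : lowerCentralSeries K (p + c - 1) = ⊥)

include hp he hq hc htr in
/-- product case: `q`-th power map is multiplicative modulo `Ω_{ℓ+1}`. -/
lemma need1 (ℓ : ℕ) (hℓ : c ≤ ℓ) (a b : K) (ha : a ∈ lowerCentralSeries K ℓ)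
    (hb : b ∈ lowerCentralSeries K ℓ) (haq : a ^ q ∈ Om q (ℓ + 1))
    (hbq : b ^ q ∈ Om q (ℓ + 1)) : (a * b) ^ q ∈ Om q (ℓ + 1) := by
  classical
  set M := p + c - 1 with hM
  set φ : ℕ → ℕ := fun m => (ℓ + 1) * m - 1 with hφ
  set F : ℕ → Subgroup K := fun m => lowerCentralSeries K (φ m) with hF
  have hℓ1 : 1 ≤ ℓ := le_trans hc hℓ
  have hφadd : ∀ i j, 1 ≤ i → 1 ≤ j → φ (i + j) ≤ φ i + φ j + 1 := by
    intro i j hi hj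
    show (ℓ + 1) * (i + j) - 1 ≤ ((ℓ + 1) * i - 1) + ((ℓ + 1) * j - 1) + 1
    rw [Nat.mul_add]
    have h1 : 1 ≤ (ℓ + 1) * i := Nat.one_le_iff_ne_zero.mpr (by positivity)
    have h2 : 1 ≤ (ℓ + 1) * j := Nat.one_le_iff_ne_zero.mpr (by positivity)
    omega
  have hφmono : Monotone φ := by
    intro a' b' hab
    show (ℓ + 1) * a' - 1 ≤ (ℓ + 1) * b' - 1
    have := Nat.mul_le_mul_left (ℓ + 1) hab
    omega
  have hanti : ∀ i j : ℕ, i ≤ j → F j ≤ F i := fun i j hij =>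
    lowerCentralSeries_antitone (hφmono hij)
  have hsc : ∀ (i j : ℕ) (x y : K), x ∈ F i → y ∈ F j → ⁅x, y⁆ ∈ F (i + j) := by
    intro i j x y hx hy
    exact sc_phi φ (by show (ℓ + 1) * 0 - 1 = 0; omega) hφadd hφmono i j x y hx hy
  have hF1 : F 1 = lowerCentralSeries K ℓ := by
    show lowerCentralSeries K ((ℓ + 1) * 1 - 1) = _
    rw [Nat.mul_one, Nat.add_sub_cancel]
  set t : PTree K := .mul (.binom b⁻¹ 1 0) (.mul (.binom a⁻¹ 1 0) (.binom (a * b) 1 0)) with ht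
  have hvalid : PTree.Valid F t := by
    refine ⟨?_, ?_, ?_⟩ <;>
      · show _ ∈ F (0 + 1)
        rw [Nat.zero_add, hF1]
        first
          | exact inv_mem hb
          | exact inv_mem ha
          | exact mul_mem ha hb
  have hlvl : PTree.lvl t = 0 := by simp [ht, PTree.lvl]
  have hT : F (PTree.lvl t + (M + 1)) = ⊥ := by
    rw [hlvl, eq_bot_iff, ← htr]
    refine lowerCentralSeries_antitone ?_
    rw [Nat.zero_add]
    have h1 : M + 1 ≤ (ℓ + 1) * (M + 1) := Nat.le_mul_of_pos_left (M + 1) (by omega)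
    show p + c - 1 ≤ (ℓ + 1) * (M + 1) - 1
    omega
  obtain ⟨cf, hcf, heq⟩ := PTree.taylor F hanti hsc t hvalid (M + 1) hT
  have heval : ∀ n, PTree.eval t n = b⁻¹ ^ n * (a⁻¹ ^ n * (a * b) ^ n) := by
    intro n
    simp [ht, PTree.eval, Nat.choose_one_right]
  have hkey : ∀ n, (a * b) ^ n = a ^ n * b ^ n * PTree.eval t n := by
    intro n
    rw [heval n, inv_pow, inv_pow]
    group
  obtain ⟨s, hs⟩ : ∃ s, M + 1 = s + 2 := ⟨M - 1, by have := hp.two_le; omega⟩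
  have hsplit : ∀ n, PTree.eval t n =
      cf 0 ^ n.choose 0 * cf 1 ^ n.choose 1 *
        ((List.range s).map (fun k => cf (k + 2) ^ n.choose (k + 2))).prod := by
    intro n
    rw [heq n, hs, prod_split2]
  have htail0 : ∀ n : ℕ, n ≤ 1 →
      ((List.range s).map (fun k => cf (k + 2) ^ n.choose (k + 2))).prod = 1 := by
    intro n hn
    apply List.prod_eq_one
    intro y hy
    simp only [List.mem_map, List.mem_range] at hy
    obtain ⟨k, _, rfl⟩ := hy
    rw [Nat.choose_eq_zero_of_lt (by omega), pow_zero]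
  have hev0 : PTree.eval t 0 = 1 := by rw [heval]; simp
  have hev1 : PTree.eval t 1 = 1 := by rw [heval]; group
  have hc0 : cf 0 = 1 := by
    have h0 := hsplit 0
    rw [htail0 0 (by omega), hev0] at h0
    simp only [Nat.choose_zero_right, pow_one, Nat.choose_one_right, pow_zero, mul_one] at h0
    exact h0.symm
  have hc1 : cf 1 = 1 := by
    have h1 := hsplit 1
    rw [htail0 1 (by omega), hev1, hc0] at h1
    simp only [Nat.choose_zero_right, pow_one, Nat.choose_one_right, one_pow, one_mul,
      mul_one] at h1
    exact h1.symm
  have hmem : PTree.eval t q ∈ Om q (ℓ + 1) := by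
    rw [hsplit q, hc0, hc1, one_pow, one_pow, one_mul, one_mul]
    refine Subgroup.list_prod_mem _ ?_
    intro y hy
    simp only [List.mem_map, List.mem_range] at hy
    obtain ⟨k, _, rfl⟩ := hy
    have hcfk : cf (k + 2) ∈ lowerCentralSeries K ((ℓ + 1) * (k + 2) - 1) := by
      have := hcf (k + 2)
      rw [hlvl, Nat.zero_add] at this
      exact this
    rcases lt_or_ge (k + 2) p with hkp | hkp
    · obtain ⟨m, hm⟩ : q ∣ q.choose (k + 2) := by
        rw [hq]; exact pe_dvd_choose hp (by omega) hkp
      rw [hm, mul_comm, pow_mul]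
      refine mem_Om (pow_mem ?_ m)
      refine lowerCentralSeries_antitone ?_ hcfk
      have : 2 * (ℓ + 1) ≤ (k + 2) * (ℓ + 1) := Nat.mul_le_mul_right (ℓ + 1) (by omega)
      rw [Nat.mul_comm (ℓ + 1) (k + 2)]
      omega
    · have hbig : cf (k + 2) ∈ lowerCentralSeries K (p + c - 1) := by
        refine lowerCentralSeries_antitone ?_ hcfk
        have h1 : (c + 1) * p ≤ (ℓ + 1) * (k + 2) :=
          Nat.mul_le_mul (by omega) (by omega)
        have h2 : c ≤ c * p := Nat.le_mul_of_pos_right c hp.pos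
        have h3 : (c + 1) * p = c * p + p := by ring
        omega
      rw [htr] at hbig
      simp only [Subgroup.mem_bot] at hbig
      rw [hbig, one_pow]
      exact one_mem _
  have := hkey q
  rw [this]
  exact mul_mem (mul_mem haq hbq) hmem

end Engine2
end HPc

namespace HPc
section Engine3
variable {K : Type*} [Group K]
variable (q p e c : ℕ) (hp : p.Prime) (he : 1 ≤ e) (hq : q = p ^ e) (hc : 1 ≤ c)
variable (htr : lowerCentralSeries K (p + c - 1) = ⊥)
variable (hcm : ∀ u ∈ lowerCentralSeries K (c - 1), ∀ x : K, ⁅u, x ^ q⁆ = 1)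

include hp he hq hc htr hcm in
lemma engine (ℓ : ℕ) (hℓ : c ≤ ℓ) : ∀ g ∈ lowerCentralSeries K ℓ, g ^ q ∈ Om q (ℓ + 1) := by
  set T : Subgroup K :=
    { carrier := {g : K | g ∈ lowerCentralSeries K ℓ ∧ g ^ q ∈ Om q (ℓ + 1)}
      one_mem' := ⟨one_mem _, by rw [one_pow]; exact one_mem _⟩
      mul_mem' := by
        rintro a b ⟨ha1, ha2⟩ ⟨hb1, hb2⟩
        exact ⟨mul_mem ha1 hb1, need1 q p e c hp he hq hc htr ℓ hℓ a b ha1 hb1 ha2 hb2⟩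
      inv_mem' := by
        rintro a ⟨ha1, ha2⟩
        exact ⟨inv_mem ha1, by rw [inv_pow]; exact inv_mem ha2⟩ } with hT
  have hle : lowerCentralSeries K ℓ ≤ T := by
    have hsucc : lowerCentralSeries K ℓ = ⁅lowerCentralSeries K (ℓ - 1), (⊤ : Subgroup K)⁆ := by
      rw [← lcs_succ_comm (ℓ - 1), show ℓ - 1 + 1 = ℓ by omega]
    rw [hsucc, Subgroup.commutator_le]
    intro u hu x _
    refine ⟨?_, need2 q p e c hp he hq hc htr hcm ℓ hℓ u hu x⟩
    rw [hsucc]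
    exact Subgroup.commutator_mem_commutator hu (Subgroup.mem_top x)
  exact fun g hg => (hle hg).2

include hp he hq hc htr hcm in
lemma om_bot : ∀ d m : ℕ, c ≤ m → p + c - 1 ≤ m + d → Om (K := K) q m = ⊥ := by
  intro d
  induction d with
  | zero =>
    intro m hm hMm
    rw [eq_bot_iff, Om, Subgroup.closure_le]
    rintro y ⟨x, hx, rfl⟩
    have hx1 : x ∈ lowerCentralSeries K (p + c - 1) :=
      lowerCentralSeries_antitone (by omega) hx
    rw [htr] at hx1
    simp only [Subgroup.mem_bot] at hx1
    simp [hx1]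
  | succ d ih =>
    intro m hm hMm
    rcases le_or_gt (p + c - 1) m with h | h
    · exact ih m hm (by omega)
    · rw [eq_bot_iff, Om, Subgroup.closure_le]
      rintro y ⟨x, hx, rfl⟩
      have := engine q p e c hp he hq hc htr hcm m hm x hx
      rw [ih (m + 1) (by omega) (by omega)] at this
      simpa using this

end Engine3
end HPc

/-- Corollary 3.4: if `G = F/R` is a `p`-group of class at most `p - 1` and
exponent dividing `p^e` (i.e. `γ_p(F) ≤ R` and `x^(p^e) ∈ R` for all `x ∈ F`),
then every `g ∈ R ∩ γ_{c+1}(F)` satisfies `g^(p^e) ∈ [R, cF]`; that is, the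
exponent of `M^(c)(G) = (R ∩ γ_{c+1}(F))/[R, cF]` divides `exp(G)`.
(Here `γ_p(F) = lowerCentralSeries F (p - 1)`.) -/
theorem nilpotentMultiplier_exponent_dvd_of_class_lt_p {F : Type*} [Group F]
    [IsFreeGroup F] (R : Subgroup F) [R.Normal] (p e c : ℕ) (hp : p.Prime)
    (he : 1 ≤ e) (hc : 1 ≤ c)
    (hnil : (⊤ : Subgroup F).lowerCentralSeries (p - 1) ≤ R)
    (hexp : ∀ x : F, x ^ (p ^ e) ∈ R)
    (g : F) (hg : g ∈ R ⊓ (⊤ : Subgroup F).lowerCentralSeries c) :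
    g ^ (p ^ e) ∈ iteratedCommutator R c := by
  classical
  set q := p ^ e with hqdef
  set W : Subgroup F := iteratedCommutator R c with hW
  haveI hWn : W.Normal := HPc.itC_normal R c
  set π : F →* F ⧸ W := QuotientGroup.mk' W with hπ
  have hπs : Function.Surjective π := QuotientGroup.mk'_surjective W
  set N : Subgroup (F ⧸ W) := R.map π with hN
  haveI hNn : N.Normal := Subgroup.Normal.map ‹R.Normal› π hπs
  have hlcs : ∀ n, (HPc.lowerCentralSeries F n).map π = HPc.lowerCentralSeries (F ⧸ W) n := by
    intro n
    induction n with
    | zero =>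
      rw [HPc.lowerCentralSeries_zero, HPc.lowerCentralSeries_zero]
      exact Subgroup.map_top_of_surjective π hπs
    | succ n ih =>
      rw [HPc.lcs_succ_comm, HPc.lcs_succ_comm, Subgroup.map_commutator, ih,
        Subgroup.map_top_of_surjective π hπs]
  have hitC : ∀ i, (iteratedCommutator R i).map π = iteratedCommutator N i := by
    intro i
    induction i with
    | zero => rfl
    | succ i ih =>
      rw [HPc.itC_succ, HPc.itC_succ, Subgroup.map_commutator, ih,
        Subgroup.map_top_of_surjective π hπs]
  have hWbot : iteratedCommutator N c = ⊥ := by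
    rw [← hitC c]
    rw [Subgroup.map_eq_bot_iff, hπ, QuotientGroup.ker_mk']
  have htr : HPc.lowerCentralSeries (F ⧸ W) (p + c - 1) = ⊥ := by
    have h1 : HPc.lowerCentralSeries F (p - 1 + c) ≤ W := HPc.lcs_le_itC R hnil c
    rw [← hlcs, show p + c - 1 = p - 1 + c by have := hp.two_le; omega, eq_bot_iff]
    calc (HPc.lowerCentralSeries F (p - 1 + c)).map π ≤ W.map π := Subgroup.map_mono h1
      _ = ⊥ := by rw [Subgroup.map_eq_bot_iff, hπ, QuotientGroup.ker_mk']
  have hcm : ∀ u ∈ HPc.lowerCentralSeries (F ⧸ W) (c - 1), ∀ x : F ⧸ W, ⁅u, x ^ q⁆ = 1 := by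
    intro u hu x
    obtain ⟨x', rfl⟩ := hπs x
    have hxq : x' ^ q ∈ R := hexp x'
    have hxqN : π x' ^ q ∈ N := by
      rw [← map_pow]
      exact Subgroup.mem_map_of_mem π hxq
    have h2 : ⁅u, π x' ^ q⁆ ∈ iteratedCommutator N (c - 1 + 1) :=
      HPc.itC_C N (c - 1) (Subgroup.commutator_mem_commutator hu hxqN)
    rw [show c - 1 + 1 = c by omega, hWbot] at h2
    simpa using h2
  have hgc : π g ∈ HPc.lowerCentralSeries (F ⧸ W) c := by
    rw [← hlcs c]
    exact Subgroup.mem_map_of_mem π hg.2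
  have hmain : (π g) ^ q ∈ HPc.Om q (c + 1) :=
    HPc.engine q p e c hp he rfl hc htr hcm c le_rfl (π g) hgc
  have hOmbot : HPc.Om (K := F ⧸ W) q (c + 1) = ⊥ :=
    HPc.om_bot q p e c hp he rfl hc htr hcm p (c + 1) (by omega) (by omega)
  rw [hOmbot] at hmain
  simp only [Subgroup.mem_bot] at hmain
  have hker : g ^ q ∈ π.ker := by
    rw [MonoidHom.mem_ker, map_pow, hmain]
  rwa [hπ, QuotientGroup.ker_mk'] at hker
end
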